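/- arXiv:2501.01906 — 6 statements merged into one kernel-verified Lean document; each statement's English description precedes it below -/
import Mathlib

section
/- Let K be an infinite field, and let r, n, d ≥ 1 be integers with m = binom(n+d, n). Then there exist points P_1, …, P_r ∈ ℙⁿ(K) such that the K-vector space {F ∈ S_{n,d}(K) : F(P_i) = 0 for every 1 ≤ i ≤ r} has dimension exactly max(m − r, 0). -/
open Module MvPolynomial LinearMap

theorem degree_toFinsupp {α : Type*} [DecidableEq α] (m : Multiset α) :
    (Multiset.toFinsupp m).degree = Multiset.card m := by
  rw [Finsupp.degree, ← Multiset.toFinsupp_sum_eq m, Finsupp.sum]; rfl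

noncomputable def degSubtypeEquiv (k d : ℕ) :
    Sym (Fin k) d ≃ {s : Fin k →₀ ℕ // s.degree = d} :=
  Equiv.subtypeEquiv Multiset.toFinsupp.toEquiv (fun m => by
    simp [degree_toFinsupp])

noncomputable instance degFintype (k d : ℕ) : Fintype {s : Fin k →₀ ℕ // s.degree = d} :=
  Fintype.ofEquiv _ (degSubtypeEquiv k d)

theorem card_deg (n d : ℕ) :
    Fintype.card {s : Fin (n+1) →₀ ℕ // s.degree = d} = (n + d).choose n := by
  rw [← Fintype.card_congr (degSubtypeEquiv (n+1) d), Sym.card_sym_eq_choose]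
  simp only [Fintype.card_fin]
  have h1 : n + 1 + d - 1 = n + d := by omega
  rw [h1, ← Nat.choose_symm (Nat.le_add_right n d), Nat.add_sub_cancel_left]

noncomputable instance degFintype' (k d : ℕ) : Fintype ↥{s : Fin k →₀ ℕ | s.degree = d} :=
  degFintype k d

theorem finrank_homog (K : Type*) [Field K] (n d : ℕ) :
    finrank K ↥(homogeneousSubmodule (Fin (n+1)) K d) = (n + d).choose n := by
  have he : homogeneousSubmodule (Fin (n+1)) K d
      = restrictSupport K {s : Fin (n+1) →₀ ℕ | s.degree = d} :=
    homogeneousSubmodule_eq_finsupp_supported _ _ _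
  rw [he]
  rw [Module.finrank_eq_card_basis
    (MvPolynomial.basisRestrictSupport K {s : Fin (n+1) →₀ ℕ | s.degree = d})]
  rw [← card_deg n d]
  exact Fintype.card_congr (Equiv.refl _)

instance homogFD (K : Type*) [Field K] (n d : ℕ) :
    FiniteDimensional K ↥(homogeneousSubmodule (Fin (n+1)) K d) := by
  have he : homogeneousSubmodule (Fin (n+1)) K d
      = restrictSupport K {s : Fin (n+1) →₀ ℕ | s.degree = d} :=
    homogeneousSubmodule_eq_finsupp_supported _ _ _
  rw [he]
  exact Module.Finite.of_basis
    (MvPolynomial.basisRestrictSupport K {s : Fin (n+1) →₀ ℕ | s.degree = d})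

theorem finrank_inf_ker_add_one {K M : Type*} [Field K] [AddCommGroup M] [Module K M]
    (V : Submodule K M) [FiniteDimensional K V] (f : M →ₗ[K] K)
    {x : M} (hx : x ∈ V) (hf : f x ≠ 0) :
    finrank K ↥(V ⊓ LinearMap.ker f) + 1 = finrank K ↥V := by
  set g := f.domRestrict V with hg
  have hker : LinearMap.ker g = (V ⊓ LinearMap.ker f).comap V.subtype := by
    rw [hg, LinearMap.ker_domRestrict, Submodule.comap_inf, Submodule.comap_subtype_self,
      top_inf_eq]
  have h1 : finrank K ↥(LinearMap.ker g) = finrank K ↥(V ⊓ LinearMap.ker f) := by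
    rw [hker]
    exact (Submodule.comapSubtypeEquivOfLe inf_le_left).finrank_eq
  have hrange : LinearMap.range g = ⊤ := by
    rw [eq_top_iff]
    rintro y -
    refine ⟨(y * (f x)⁻¹) • ⟨x, hx⟩, ?_⟩
    simp [hg, mul_assoc, inv_mul_cancel₀ hf]
  have := LinearMap.finrank_range_add_finrank_ker g
  rw [hrange, finrank_top, finrank_self, h1] at this
  omega

theorem aux5 (K : Type*) [Field K] [Infinite K] (n d : ℕ) (hd : 1 ≤ d) (r : ℕ) :
    ∃ P : Fin r → (Fin (n + 1) → K), (∀ i, P i ≠ 0) ∧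
      Module.finrank K
        ↥(MvPolynomial.homogeneousSubmodule (Fin (n + 1)) K d ⊓
          ⨅ i : Fin r, LinearMap.ker (MvPolynomial.aeval (R := K) (S₁ := K) (P i)).toLinearMap) =
        (n + d).choose n - r := by
  induction r with
  | zero =>
    refine ⟨Fin.elim0, fun i => i.elim0, ?_⟩
    rw [iInf_of_empty, inf_top_eq, Nat.sub_zero, finrank_homog]
  | succ r ih =>
    obtain ⟨P, hP, hrank⟩ := ih
    set H := homogeneousSubmodule (Fin (n + 1)) K d with hH
    set V := H ⊓ ⨅ i : Fin r, LinearMap.ker (aeval (R := K) (S₁ := K) (P i)).toLinearMap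
      with hVdef
    haveI : FiniteDimensional K ↥V := Submodule.finiteDimensional_of_le inf_le_left
    have key : ∀ Q : Fin (n + 1) → K,
        (⨅ i : Fin (r + 1),
            LinearMap.ker (aeval (R := K) (S₁ := K) ((Fin.snoc P Q : Fin (r+1) → (Fin (n+1) → K)) i)).toLinearMap)
          = (⨅ i : Fin r, LinearMap.ker (aeval (R := K) (S₁ := K) (P i)).toLinearMap) ⊓
              LinearMap.ker (aeval (R := K) (S₁ := K) Q).toLinearMap := by
      intro Q
      apply le_antisymm
      · refine le_inf (le_iInf fun i => ?_) ?_
        · have := iInf_le (fun j : Fin (r + 1) =>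
            LinearMap.ker (aeval (R := K) (S₁ := K) ((Fin.snoc P Q : Fin (r+1) → (Fin (n+1) → K)) j)).toLinearMap) i.castSucc
          rwa [Fin.snoc_castSucc] at this
        · have := iInf_le (fun j : Fin (r + 1) =>
            LinearMap.ker (aeval (R := K) (S₁ := K) ((Fin.snoc P Q : Fin (r+1) → (Fin (n+1) → K)) j)).toLinearMap) (Fin.last r)
          rwa [Fin.snoc_last] at this
      · refine le_iInf fun i => ?_
        refine Fin.lastCases ?_ ?_ i
        · rw [Fin.snoc_last]; exact inf_le_right
        · intro j; rw [Fin.snoc_castSucc]; exact inf_le_left.trans (iInf_le _ j)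
    have snoc_ne : ∀ (Q : Fin (n + 1) → K), Q ≠ 0 → ∀ i, (Fin.snoc P Q : Fin (r+1) → (Fin (n+1) → K)) i ≠ 0 := by
      intro Q hQ i
      refine Fin.lastCases ?_ ?_ i
      · rw [Fin.snoc_last]; exact hQ
      · intro j; rw [Fin.snoc_castSucc]; exact hP j
    rcases eq_or_ne V ⊥ with hbot | hbot
    · have hm : (n + d).choose n - r = 0 := by
        rw [← hrank, hbot, finrank_bot]
      refine ⟨Fin.snoc P (fun _ => 1), snoc_ne _ (fun h => one_ne_zero (congrFun h 0)), ?_⟩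
      rw [key, ← inf_assoc, ← hVdef, hbot, bot_inf_eq, finrank_bot]
      omega
    · obtain ⟨F, hF, hF0⟩ := Submodule.exists_mem_ne_zero_of_ne_bot hbot
      have hFH : F.IsHomogeneous d := (Submodule.mem_inf.mp hF).1
      have hex : ∃ x : Fin (n + 1) → K, eval x F ≠ 0 := by
        by_contra h
        push_neg at h
        exact hF0 (hFH.eq_zero_of_forall_eval_eq_zero h)
      obtain ⟨x, hx⟩ := hex
      have hx0 : x ≠ 0 := by
        rintro rfl
        apply hx
        rw [show (0 : Fin (n + 1) → K) = (0 : Fin (n + 1) → K) from rfl, eval_zero,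
          constantCoeff_eq]
        exact hFH.coeff_eq_zero (by simp [map_zero]; omega)
      have heq : aeval (R := K) (S₁ := K) x F = eval x F := by
        rw [aeval_def, Algebra.algebraMap_self]; rfl
      have hfx : (aeval (R := K) (S₁ := K) x).toLinearMap F ≠ 0 := by
        simpa [heq] using hx
      have hdrop := finrank_inf_ker_add_one V ((aeval (R := K) (S₁ := K) x).toLinearMap) hF hfx
      have hVne : 1 ≤ (n + d).choose n - r := by
        rw [← hrank]
        by_contra h
        push_neg at h
        interval_cases h' : finrank K ↥V
        exact hbot (Submodule.finrank_eq_zero.mp h')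
      refine ⟨Fin.snoc P x, snoc_ne _ hx0, ?_⟩
      rw [key, ← inf_assoc, ← hVdef]
      omega

/-- **Lemma (infinite fields).** Let `K` be an infinite field and `r, n, d ≥ 1` integers with
`m = (n+d).choose n`. Then there exist points `P_1, …, P_r ∈ ℙⁿ(K)` (nonzero vectors in
`K^{n+1}`) such that the space of degree-`d` forms over `K` vanishing at all of them has
dimension exactly `max (m - r) 0 = m - r` (truncated subtraction). -/
theorem stmt5 (K : Type*) [Field K] [Infinite K]
    (r n d : ℕ) (hr : 1 ≤ r) (hn : 1 ≤ n) (hd : 1 ≤ d) :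
    ∃ P : Fin r → (Fin (n + 1) → K), (∀ i, P i ≠ 0) ∧
      Module.finrank K
        ↥(MvPolynomial.homogeneousSubmodule (Fin (n + 1)) K d ⊓
          ⨅ i : Fin r, LinearMap.ker (MvPolynomial.aeval (R := K) (S₁ := K) (P i)).toLinearMap) =
        (n + d).choose n - r :=
  aux5 K n d hd r
end

section
/- Let q be a prime power, d ≥ 1 and r ≥ 2 integers. A point P ∈ ℙ¹(F_{q^r}) satisfies dim_{F_q}{F ∈ S_{1,d}(F_q) : F(P) = 0} = max(d + 1 − r, 0) if and only if P = [θ : 1] for some θ ∈ F_{q^r} that does not lie in F_{q^k} for any k < min(r, d+1). In particular, the number of such points equals the number of θ ∈ F_{q^r} whose degree over F_q is at least min(r, d+1). -/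
open MvPolynomial Submodule

section Aux

/-! ### Spans of powers -/

lemma pow_mem_span_pow' {F E : Type*} [Field F] [Field E] [Algebra F E]
    [FiniteDimensional F E] (θ : E) (k : ℕ) :
    θ ^ k ∈ span F (Set.range fun i : Fin (minpoly F θ).natDegree => θ ^ (i : ℕ)) := by
  have hint : IsIntegral F θ := IsIntegral.of_finite F θ
  have h := Submodule.span_range_natDegree_eq_adjoin (minpoly.monic hint) (minpoly.aeval F θ)
  have h2 : θ ^ k ∈ Subalgebra.toSubmodule (Algebra.adjoin F {θ}) := by
    rw [Subalgebra.mem_toSubmodule]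
    exact pow_mem (Algebra.self_mem_adjoin_singleton F θ) k
  rw [← h] at h2
  refine span_le.mpr ?_ h2
  intro x hx
  simp only [Finset.coe_image, Set.mem_image, Finset.mem_coe, Finset.mem_range] at hx
  obtain ⟨j, hj, rfl⟩ := hx
  exact subset_span ⟨⟨j, hj⟩, rfl⟩

lemma finrank_span_pow' {F E : Type*} [Field F] [Field E] [Algebra F E]
    [FiniteDimensional F E] (θ : E) (m : ℕ) :
    Module.finrank F (span F (Set.range fun i : Fin m => θ ^ (i : ℕ)))
      = min m (minpoly F θ).natDegree := by
  set n := (minpoly F θ).natDegree with hn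
  rcases le_or_gt m n with h | h
  · rw [min_eq_left h]
    have hli : LinearIndependent F fun i : Fin m => θ ^ (i : ℕ) := by
      have h2 := linearIndependent_pow (K := F) θ
      exact h2.comp (Fin.castLE h) (Fin.castLE_injective h)
    rw [finrank_span_eq_card hli, Fintype.card_fin]
  · rw [min_eq_right h.le]
    have hspan : span F (Set.range fun i : Fin m => θ ^ (i : ℕ))
        = span F (Set.range fun i : Fin n => θ ^ (i : ℕ)) := by
      apply le_antisymm
      · rw [span_le]
        rintro x ⟨i, rfl⟩
        exact pow_mem_span_pow' θ i
      · apply span_mono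
        rintro x ⟨i, rfl⟩
        exact ⟨⟨i, i.2.trans h⟩, rfl⟩
    rw [hspan, finrank_span_eq_card (linearIndependent_pow θ), Fintype.card_fin]

/-! ### Homogeneous polynomials in two variables -/

/-- exponent vector of `x^i y^(d-i)` -/
noncomputable def expv (d i : ℕ) : Fin 2 →₀ ℕ :=
  Finsupp.single 0 i + Finsupp.single 1 (d - i)

lemma expv_apply_zero (d i : ℕ) : expv d i 0 = i := by
  simp [expv]

lemma degree_fin2 (s : Fin 2 →₀ ℕ) : s.degree = s 0 + s 1 := by
  rw [Finsupp.degree_apply, Finset.sum_subset (Finset.subset_univ _)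
    (fun x _ hx => Finsupp.notMem_support_iff.mp hx), Fin.sum_univ_two]

lemma expv_apply_one (d i : ℕ) : expv d i 1 = d - i := by
  simp [expv]

lemma expv_degree (d i : ℕ) (h : i ≤ d) : (expv d i).degree = d := by
  rw [degree_fin2, expv_apply_zero, expv_apply_one]
  omega

variable (F : Type*) [Field F]

/-- the monomial family -/
noncomputable def mons (d : ℕ) (i : Fin (d + 1)) : MvPolynomial (Fin 2) F :=
  MvPolynomial.monomial (expv d (i : ℕ)) 1

lemma mons_eq (d : ℕ) (i : Fin (d+1)) :
    mons F d i = (X 0 : MvPolynomial (Fin 2) F) ^ (i : ℕ) * (X 1) ^ (d - (i : ℕ)) := by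
  rw [mons, expv, X_pow_eq_monomial, X_pow_eq_monomial, monomial_mul, mul_one]

noncomputable def Lmap (d : ℕ) : (Fin (d + 1) → F) →ₗ[F] MvPolynomial (Fin 2) F :=
  Fintype.linearCombination F (mons F d)

lemma coeff_Lmap (d : ℕ) (c : Fin (d + 1) → F) (j : Fin (d + 1)) :
    MvPolynomial.coeff (expv d (j : ℕ)) (Lmap F d c) = c j := by
  classical
  rw [Lmap, Fintype.linearCombination_apply]
  rw [MvPolynomial.coeff_sum]
  have : ∀ i : Fin (d+1), MvPolynomial.coeff (expv d (j:ℕ)) (c i • mons F d i)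
      = if i = j then c i else 0 := by
    intro i
    rw [MvPolynomial.coeff_smul, mons, MvPolynomial.coeff_monomial]
    by_cases h : i = j
    · simp [h]
    · have : expv d (i:ℕ) ≠ expv d (j:ℕ) := by
        intro he
        apply h
        have := congrArg (fun s => s 0) he
        simp only [expv_apply_zero] at this
        exact Fin.ext this
      simp [this, h]
  simp_rw [this]
  simp

lemma Lmap_injective (d : ℕ) : Function.Injective (Lmap F d) := by
  rw [injective_iff_map_eq_zero]
  intro c hc
  funext j
  have := coeff_Lmap F d c j
  rw [hc] at this
  simpa using this.symm

lemma Lmap_range (d : ℕ) :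
    LinearMap.range (Lmap F d) = homogeneousSubmodule (Fin 2) F d := by
  apply le_antisymm
  · rintro p ⟨c, rfl⟩
    rw [Lmap, Fintype.linearCombination_apply]
    apply Submodule.sum_mem
    intro i _
    apply Submodule.smul_mem
    rw [mem_homogeneousSubmodule, mons]
    exact isHomogeneous_monomial _ (expv_degree d i (Nat.lt_succ_iff.mp i.2))
  · intro p hp
    rw [mem_homogeneousSubmodule] at hp
    rw [p.as_sum]
    apply Submodule.sum_mem
    intro s hs
    have hdeg : s.degree = d := by
      have := hp (MvPolynomial.mem_support_iff.mp hs)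
      rw [Finsupp.degree_eq_weight_one]; exact this
    have hsum : s 0 + s 1 = d := by rw [← hdeg, degree_fin2]
    have hs0 : s 0 ≤ d := by omega
    have hse : s = expv d (s 0) := by
      ext j
      fin_cases j
      · simp [expv]
      · simp only [expv, Finsupp.add_apply, Finsupp.single_apply]
        norm_num
        omega
    refine ⟨Pi.single ⟨s 0, Nat.lt_succ_of_le hs0⟩ (MvPolynomial.coeff s p), ?_⟩
    rw [Lmap, Fintype.linearCombination_apply_single, mons]
    simp only [Fin.val_mk]
    rw [← hse]
    rw [MvPolynomial.smul_monomial, smul_eq_mul, mul_one]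

/-! ### The kernel dimension -/

lemma finrank_inf_ker {E : Type*} [Field E] [Algebra F E] (d : ℕ) (v : Fin 2 → E) :
    Module.finrank F
        ↥(homogeneousSubmodule (Fin 2) F d ⊓
          LinearMap.ker (MvPolynomial.aeval (R := F) (S₁ := E) v).toLinearMap) =
      (d + 1) - Module.finrank F
        (span F (Set.range fun i : Fin (d + 1) => v 0 ^ (i : ℕ) * v 1 ^ (d - (i : ℕ)))) := by
  classical
  set f := (MvPolynomial.aeval (R := F) (S₁ := E) v).toLinearMap with hf
  set w : Fin (d + 1) → E := fun i => v 0 ^ (i : ℕ) * v 1 ^ (d - (i : ℕ)) with hw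
  set Φ := Fintype.linearCombination F w with hΦ
  have hfL : ∀ c, f (Lmap F d c) = Φ c := by
    intro c
    rw [Lmap, hΦ, Fintype.linearCombination_apply, Fintype.linearCombination_apply, map_sum]
    refine Finset.sum_congr rfl fun i _ => ?_
    rw [map_smul]
    congr 1
    rw [hf]
    simp [mons_eq, hw]
  have hmap : Submodule.map (Lmap F d) (LinearMap.ker Φ)
      = homogeneousSubmodule (Fin 2) F d ⊓ LinearMap.ker f := by
    ext p
    simp only [Submodule.mem_map, LinearMap.mem_ker, Submodule.mem_inf]
    constructor
    · rintro ⟨c, hc, rfl⟩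
      constructor
      · rw [← Lmap_range F d]; exact LinearMap.mem_range_self _ c
      · rw [hfL]; exact hc
    · rintro ⟨hp, hker⟩
      rw [← Lmap_range F d] at hp
      obtain ⟨c, rfl⟩ := hp
      exact ⟨c, by rw [← hfL]; exact hker, rfl⟩
  have e := Submodule.equivMapOfInjective (Lmap F d) (Lmap_injective F d) (LinearMap.ker Φ)
  rw [← hmap, ← LinearEquiv.finrank_eq e]
  have hrn := LinearMap.finrank_range_add_finrank_ker Φ
  rw [Module.finrank_fin_fun] at hrn
  have hrange : LinearMap.range Φ = span F (Set.range w) :=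
    Fintype.range_linearCombination F w
  rw [hrange] at hrn
  omega

variable {F}

lemma span_w_affine {E : Type*} [Field E] [Algebra F E] [FiniteDimensional F E]
    (d : ℕ) (v : Fin 2 → E) (hb : v 1 ≠ 0) :
    Module.finrank F
        (span F (Set.range fun i : Fin (d + 1) => v 0 ^ (i : ℕ) * v 1 ^ (d - (i : ℕ)))) =
      min (d + 1) (minpoly F (v 0 / v 1)).natDegree := by
  set θ := v 0 / v 1 with hθ
  have hv0 : v 0 = θ * v 1 := (div_mul_cancel₀ _ hb).symm
  have hfun : (fun i : Fin (d + 1) => v 0 ^ (i : ℕ) * v 1 ^ (d - (i : ℕ)))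
      = (LinearMap.mulLeft F (v 1 ^ d)) ∘ (fun i : Fin (d + 1) => θ ^ (i : ℕ)) := by
    funext i
    have hi : (i : ℕ) ≤ d := Nat.lt_succ_iff.mp i.2
    simp only [Function.comp_apply, LinearMap.mulLeft_apply]
    have hid : (i : ℕ) + (d - (i : ℕ)) = d := by omega
    rw [hv0, mul_pow, mul_assoc, ← pow_add, hid, mul_comm]
  have hkey : (Set.range fun i : Fin (d + 1) => v 0 ^ (i : ℕ) * v 1 ^ (d - (i : ℕ)))
      = (LinearMap.mulLeft F (v 1 ^ d)) '' (Set.range fun i : Fin (d + 1) => θ ^ (i : ℕ)) := by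
    rw [hfun, Set.range_comp]
  rw [hkey, ← Submodule.map_span, ← finrank_span_pow' θ (d + 1)]
  exact (LinearEquiv.finrank_eq (Submodule.equivMapOfInjective _
    (mul_right_injective₀ (pow_ne_zero d hb)) _)).symm

lemma span_w_infty {E : Type*} [Field E] [Algebra F E]
    (d : ℕ) (hd : 1 ≤ d) (v : Fin 2 → E) (h1 : v 1 = 0) (h0 : v 0 ≠ 0) :
    Module.finrank F
        (span F (Set.range fun i : Fin (d + 1) => v 0 ^ (i : ℕ) * v 1 ^ (d - (i : ℕ)))) = 1 := by
  have hspan : span F (Set.range fun i : Fin (d + 1) => v 0 ^ (i : ℕ) * v 1 ^ (d - (i : ℕ)))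
      = F ∙ (v 0 ^ d) := by
    apply le_antisymm
    · rw [span_le]
      rintro x ⟨i, rfl⟩
      rcases eq_or_lt_of_le (Nat.lt_succ_iff.mp i.2) with h | h
      · simp only [h, Nat.sub_self, pow_zero, mul_one]
        exact subset_span rfl
      · have : v 1 ^ (d - (i : ℕ)) = 0 := by
          rw [h1, zero_pow]
          omega
        simp only [this, mul_zero]
        exact Submodule.zero_mem _
    · rw [Submodule.span_singleton_le_iff_mem]
      refine subset_span ⟨⟨d, Nat.lt_succ_self d⟩, ?_⟩
      simp
  rw [hspan]
  exact finrank_span_singleton (pow_ne_zero d h0)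

end Aux

/-- **Lemma (the case `n = 1`).** Let `q` be a prime power, `d ≥ 1`, `r ≥ 2`, `F = F_q`,
`E = F_{q^r}`. A point `P ∈ ℙ¹(E)` satisfies
`dim_F {f ∈ S_{1,d}(F) : f(P) = 0} = max (d+1-r) 0 = (d+1) - r` (truncated subtraction)
iff `P = [θ : 1]` for some `θ ∈ E` whose degree over `F` is at least `min r (d+1)`.
In particular the number of such points equals the number of such `θ`. -/
theorem stmt7 (q : ℕ) (hq : IsPrimePow q) (F E : Type*) [Field F] [Fintype F]
    (hF : Fintype.card F = q) [Field E] [Algebra F E]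
    (r d : ℕ) (hr : 2 ≤ r) (hd : 1 ≤ d) (hE : Module.finrank F E = r) :
    (∀ P : Projectivization E (Fin 2 → E),
      (Module.finrank F
          ↥(MvPolynomial.homogeneousSubmodule (Fin 2) F d ⊓
            LinearMap.ker (MvPolynomial.aeval (R := F) (S₁ := E) P.rep).toLinearMap) =
          (d + 1) - r
        ↔ ∃ θ : E, min r (d + 1) ≤ (minpoly F θ).natDegree ∧
            P = Projectivization.mk E ![θ, 1]
              (by intro h; have h1 := congrFun h 1; simp at h1))) ∧
    Nat.card {P : Projectivization E (Fin 2 → E) //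
        Module.finrank F
          ↥(MvPolynomial.homogeneousSubmodule (Fin 2) F d ⊓
            LinearMap.ker (MvPolynomial.aeval (R := F) (S₁ := E) P.rep).toLinearMap) =
          (d + 1) - r} =
      Nat.card {θ : E // min r (d + 1) ≤ (minpoly F θ).natDegree} := by
  classical
  have hFD : FiniteDimensional F E := Module.finite_of_finrank_pos (by rw [hE]; omega)
  have hne : ∀ θ : E, (![θ, 1] : Fin 2 → E) ≠ 0 := by
    intro θ h
    have h1 := congrFun h 1
    simp at h1
  have key : ∀ P : Projectivization E (Fin 2 → E),
      (Module.finrank F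
          ↥(MvPolynomial.homogeneousSubmodule (Fin 2) F d ⊓
            LinearMap.ker (MvPolynomial.aeval (R := F) (S₁ := E) P.rep).toLinearMap) =
          (d + 1) - r
        ↔ ∃ θ : E, min r (d + 1) ≤ (minpoly F θ).natDegree ∧
            P = Projectivization.mk E ![θ, 1] (hne θ)) := by
    intro P
    have hv : P.rep ≠ 0 := P.rep_nonzero
    by_cases hb : P.rep 1 = 0
    · have h0 : P.rep 0 ≠ 0 := by
        intro h
        apply hv
        funext j
        fin_cases j
        · exact h
        · exact hb
      have hdim : Module.finrank F
          ↥(MvPolynomial.homogeneousSubmodule (Fin 2) F d ⊓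
            LinearMap.ker (MvPolynomial.aeval (R := F) (S₁ := E) P.rep).toLinearMap) = d := by
        rw [finrank_inf_ker, span_w_infty d hd P.rep hb h0]
        omega
      constructor
      · intro h
        rw [hdim] at h
        omega
      · rintro ⟨θ, -, hP⟩
        exfalso
        rw [← Projectivization.mk_rep P, Projectivization.mk_eq_mk_iff] at hP
        obtain ⟨a, ha⟩ := hP
        have h1 := congrFun ha 1
        simp only [Pi.smul_apply, Matrix.cons_val_one, Matrix.head_cons, smul_eq_mul,
          Units.smul_def, mul_one, Matrix.cons_val_zero] at h1
        rw [← h1] at hb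
        exact a.ne_zero hb
    · set θ := P.rep 0 / P.rep 1 with hθdef
      have hPmk : P = Projectivization.mk E ![θ, 1] (hne θ) := by
        conv_lhs => rw [← Projectivization.mk_rep P]
        rw [Projectivization.mk_eq_mk_iff']
        refine ⟨P.rep 1, ?_⟩
        funext j
        fin_cases j
        · show P.rep 1 • (![θ, 1] : Fin 2 → E) 0 = P.rep 0
          simp only [Matrix.cons_val_zero, smul_eq_mul, hθdef]
          rw [mul_comm, div_mul_cancel₀ _ hb]
        · show P.rep 1 • (![θ, 1] : Fin 2 → E) 1 = P.rep 1
          simp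
      have hn_le : (minpoly F θ).natDegree ≤ r := by
        rw [← hE]
        exact minpoly.natDegree_le θ
      have hdim : Module.finrank F
          ↥(MvPolynomial.homogeneousSubmodule (Fin 2) F d ⊓
            LinearMap.ker (MvPolynomial.aeval (R := F) (S₁ := E) P.rep).toLinearMap) =
          (d + 1) - min (d + 1) (minpoly F θ).natDegree := by
        rw [finrank_inf_ker, span_w_affine d P.rep hb]
      constructor
      · intro h
        rw [hdim] at h
        exact ⟨θ, by omega, hPmk⟩
      · rintro ⟨θ', hθ', hP'⟩
        have hθθ : θ' = θ := by
          rw [hPmk, Projectivization.mk_eq_mk_iff] at hP'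
          obtain ⟨a, ha⟩ := hP'
          have h1 := congrFun ha 1
          have h00 := congrFun ha 0
          simp only [Pi.smul_apply, Matrix.cons_val_one, Matrix.head_cons, smul_eq_mul,
            Units.smul_def, mul_one, Matrix.cons_val_zero] at h1 h00
          rw [h1, one_mul] at h00
          exact h00
        rw [hθθ] at hθ'
        rw [hdim]
        omega
  refine ⟨key, ?_⟩
  refine (Nat.card_congr (Equiv.ofBijective
    (fun θ : {θ : E // min r (d + 1) ≤ (minpoly F θ).natDegree} =>
      (⟨Projectivization.mk E ![θ.1, 1] (hne θ.1),
        (key _).mpr ⟨θ.1, θ.2, rfl⟩⟩ : {P : Projectivization E (Fin 2 → E) //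
          Module.finrank F
            ↥(MvPolynomial.homogeneousSubmodule (Fin 2) F d ⊓
              LinearMap.ker (MvPolynomial.aeval (R := F) (S₁ := E) P.rep).toLinearMap) =
            (d + 1) - r}))
    ⟨?_, ?_⟩)).symm
  · rintro ⟨θ, hθ⟩ ⟨θ', hθ'⟩ h
    simp only [Subtype.mk.injEq] at h
    apply Subtype.ext
    rw [Projectivization.mk_eq_mk_iff] at h
    obtain ⟨a, ha⟩ := h
    have h1 := congrFun ha 1
    have h00 := congrFun ha 0
    simp only [Pi.smul_apply, Matrix.cons_val_one, Matrix.head_cons, smul_eq_mul,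
      Units.smul_def, mul_one, Matrix.cons_val_zero] at h1 h00
    rw [h1, one_mul] at h00
    exact h00.symm
  · rintro ⟨P, hP⟩
    obtain ⟨θ, hθ, hPeq⟩ := (key P).mp hP
    refine ⟨⟨θ, hθ⟩, ?_⟩
    apply Subtype.ext
    exact hPeq.symm
end

section
/- Let q be a prime power and let n ≥ n' ≥ 1, d ≥ 1 and 1 ≤ r ≤ m' := binom(n'+d, n') be integers; set m = binom(n+d, n). If there exists a point P' ∈ ℙ^{n'}(F_{q^r}) such that dim_{F_q}{F ∈ S_{n',d}(F_q) : F(P') = 0} = m' − r, then there exists a point P ∈ ℙⁿ(F_{q^r}) such that dim_{F_q}{F ∈ S_{n,d}(F_q) : F(P) = 0} = m − r. -/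
open MvPolynomial in
lemma finrank_homog_aux (F : Type*) [Field F] (N d : ℕ) :
    Module.finrank F (homogeneousSubmodule (Fin (N + 1)) F d) = (N + d).choose N := by
  classical
  let s : Set (Fin (N + 1) →₀ ℕ) := {d' | d'.degree = d}
  have hsub : homogeneousSubmodule (Fin (N + 1)) F d = AddMonoidAlgebra.supported F F s :=
    homogeneousSubmodule_eq_finsupp_supported _ _ _
  have e2 : s ≃ Sym (Fin (N + 1)) d := by
    refine (Equiv.subtypeEquivRight (q := fun P => P.sum (fun _ => id) = d) fun P => ?_).trans
      (Sym.equivNatSum (Fin (N + 1)) d).symm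
    simp [s, Finsupp.sum, Finsupp.degree_apply, Set.mem_setOf_eq]
  haveI : Fintype s := Fintype.ofEquiv _ e2.symm
  have e1 : ↥(homogeneousSubmodule (Fin (N + 1)) F d) ≃ₗ[F] (s → F) := by
    rw [hsub]
    exact (AddMonoidAlgebra.supportedEquivFinsupp s).trans (Finsupp.linearEquivFunOnFinite F F s)
  rw [e1.finrank_eq, Module.finrank_pi, Fintype.card_congr e2, Sym.card_sym_eq_choose,
    Fintype.card_fin]
  have h1 : N + 1 + d - 1 = N + d := by omega
  rw [h1, ← Nat.choose_symm (Nat.le_add_right N d), Nat.add_sub_cancel_left]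

open MvPolynomial in
lemma fd_homog_aux (F : Type*) [Field F] (N d : ℕ) :
    FiniteDimensional F (homogeneousSubmodule (Fin (N + 1)) F d) := by
  apply FiniteDimensional.of_finrank_pos
  rw [finrank_homog_aux]
  exact Nat.choose_pos (Nat.le_add_right N d)

/-- **Lemma (reduction in the dimension `n`).** Let `q` be a prime power, `F = F_q`,
`E = F_{q^r}` and `n ≥ n' ≥ 1`, `d ≥ 1`, `1 ≤ r ≤ m' = (n'+d).choose n'` integers,
`m = (n+d).choose n`. If there is a point `P' ∈ ℙ^{n'}(E)` with
`dim_F {f ∈ S_{n',d}(F) : f(P') = 0} = m' − r`, then there is a point `P ∈ ℙⁿ(E)` with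
`dim_F {f ∈ S_{n,d}(F) : f(P) = 0} = m − r`. -/
theorem stmt8 (q : ℕ) (hq : IsPrimePow q) (F E : Type*) [Field F] [Fintype F]
    (hF : Fintype.card F = q) [Field E] [Algebra F E]
    (n n' d r : ℕ) (hn' : 1 ≤ n') (hnn : n' ≤ n) (hd : 1 ≤ d)
    (hr1 : 1 ≤ r) (hrm : r ≤ (n' + d).choose n') (hE : Module.finrank F E = r)
    (P' : Fin (n' + 1) → E) (hP' : P' ≠ 0)
    (h : Module.finrank F
        ↥(MvPolynomial.homogeneousSubmodule (Fin (n' + 1)) F d ⊓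
          LinearMap.ker (MvPolynomial.aeval (R := F) (S₁ := E) P').toLinearMap) =
        (n' + d).choose n' - r) :
    ∃ P : Fin (n + 1) → E, P ≠ 0 ∧
      Module.finrank F
        ↥(MvPolynomial.homogeneousSubmodule (Fin (n + 1)) F d ⊓
          LinearMap.ker (MvPolynomial.aeval (R := F) (S₁ := E) P).toLinearMap) =
        (n + d).choose n - r := by
  classical
  haveI : FiniteDimensional F E := Module.finite_of_finrank_pos (by omega)
  haveI := fd_homog_aux F n' d
  haveI := fd_homog_aux F n d
  set ι : Fin (n' + 1) → Fin (n + 1) := Fin.castLE (by omega) with hι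
  set P : Fin (n + 1) → E :=
    fun i => if h : (i : ℕ) < n' + 1 then P' ⟨i, h⟩ else 0 with hPdef
  have hcomp : P ∘ ι = P' := by
    funext j
    simp [hPdef, hι, Fin.castLE, j.isLt]
    exact fun h => absurd j.isLt (by omega)
  refine ⟨P, ?_, ?_⟩
  · intro h0
    apply hP'
    funext j
    have : P (ι j) = 0 := by rw [h0]; rfl
    rwa [← Function.comp_apply (f := P) (g := ι), hcomp] at this
  set S' := MvPolynomial.homogeneousSubmodule (Fin (n' + 1)) F d with hS'
  set S := MvPolynomial.homogeneousSubmodule (Fin (n + 1)) F d with hS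
  have finrank_ker : ∀ (σ : Type) [Fintype σ] (Q : σ → E)
      (T : Submodule F (MvPolynomial σ F)),
      Module.finrank F
        (LinearMap.ker ((MvPolynomial.aeval (R := F) (S₁ := E) Q).toLinearMap.domRestrict T)) =
      Module.finrank F
        ↥(T ⊓ LinearMap.ker (MvPolynomial.aeval (R := F) (S₁ := E) Q).toLinearMap) := by
    intro σ _ Q T
    have kerEq :
        LinearMap.ker ((MvPolynomial.aeval (R := F) (S₁ := E) Q).toLinearMap.domRestrict T) =
        Submodule.comap T.subtype
          (T ⊓ LinearMap.ker (MvPolynomial.aeval (R := F) (S₁ := E) Q).toLinearMap) := by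
      rw [LinearMap.ker_domRestrict]
      ext x
      simp only [LinearMap.mem_ker, Submodule.mem_comap, Submodule.mem_inf,
        Submodule.subtype_apply]
      exact ⟨fun hx => ⟨x.2, hx⟩, fun hx => hx.2⟩
    rw [kerEq]
    exact (Submodule.comapSubtypeEquivOfLe inf_le_left).finrank_eq
  -- the restricted map on S' is surjective
  have hrank' := LinearMap.finrank_range_add_finrank_ker
    ((MvPolynomial.aeval (R := F) (S₁ := E) P').toLinearMap.domRestrict S')
  have hfr' : Module.finrank F ↥S' = (n' + d).choose n' := finrank_homog_aux F n' d
  rw [finrank_ker, h, hfr'] at hrank'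
  have hrange' : Module.finrank F
      (LinearMap.range ((MvPolynomial.aeval (R := F) (S₁ := E) P').toLinearMap.domRestrict S')) =
      r := by omega
  have hsurj' : LinearMap.range
      ((MvPolynomial.aeval (R := F) (S₁ := E) P').toLinearMap.domRestrict S') = ⊤ :=
    Submodule.eq_top_of_finrank_eq (by rw [hrange', hE])
  -- hence the restricted map on S is surjective
  have hsurj : LinearMap.range
      ((MvPolynomial.aeval (R := F) (S₁ := E) P).toLinearMap.domRestrict S) = ⊤ := by
    rw [eq_top_iff]
    rintro e -
    have he : e ∈ LinearMap.range
        ((MvPolynomial.aeval (R := F) (S₁ := E) P').toLinearMap.domRestrict S') :=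
      hsurj' ▸ Submodule.mem_top
    obtain ⟨⟨g, hg⟩, hge⟩ := he
    refine ⟨⟨MvPolynomial.rename ι g, ?_⟩, ?_⟩
    · exact MvPolynomial.IsHomogeneous.rename_isHomogeneous hg
    · simp only [LinearMap.domRestrict_apply, AlgHom.toLinearMap_apply,
        MvPolynomial.aeval_rename, hcomp]
      simpa [LinearMap.domRestrict_apply] using hge
  -- rank-nullity on S
  have hrank := LinearMap.finrank_range_add_finrank_ker
    ((MvPolynomial.aeval (R := F) (S₁ := E) P).toLinearMap.domRestrict S)
  have hfr : Module.finrank F ↥S = (n + d).choose n := finrank_homog_aux F n d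
  rw [finrank_ker, hsurj, finrank_top, hE, hfr] at hrank
  have h1 : (n' + d).choose n' = (n' + d).choose d := by
    rw [← Nat.choose_symm (Nat.le_add_left d n')]; congr 1; omega
  have h2 : (n + d).choose n = (n + d).choose d := by
    rw [← Nat.choose_symm (Nat.le_add_left d n)]; congr 1; omega
  have hm : (n' + d).choose n' ≤ (n + d).choose n := by
    rw [h1, h2]; exact Nat.choose_le_choose d (by omega)
  omega
end

section
/- Let k ≥ 1 and let f_1, …, f_k, g_1, …, g_k be polynomials with real coefficients. Let M be a real number, let t_0 ≤ z be integers, and let q_0 > 1 be an integer. Define f(q, t) = Σ_{i=1}^{k} f_i(t)·q^{−g_i(t)} for real q > 1 and real t. Suppose: (i) f_i(t) ≥ 0 and g_i(t) ≥ 0 for every integer t ≥ t_0 and every 1 ≤ i ≤ k; (ii) f_i(x)·g_i'(x)·log(q_0) ≥ f_i'(x) for every real x ≥ z and every 1 ≤ i ≤ k; (iii) f(q_0, t) < M for every integer t with t_0 ≤ t ≤ z. Then f(q, t) < M for every integer t ≥ t_0 and every real q ≥ q_0. -/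
open Polynomial

/-- **Lemma (a useful lemma from calculus).** Let `k ≥ 1`, `f_1,…,f_k, g_1,…,g_k` real
polynomials, `M ∈ ℝ`, `t_0 ≤ z` integers and `q_0 > 1` an integer. Define
`f(q,t) = Σ_i f_i(t)·q^{−g_i(t)}` (real powers). If
(i) `f_i(t), g_i(t) ≥ 0` for all integers `t ≥ t_0`;
(ii) `f_i(x)·g_i'(x)·log q_0 ≥ f_i'(x)` for all real `x ≥ z`;
(iii) `f(q_0, t) < M` for all integers `t_0 ≤ t ≤ z`;
then `f(q,t) < M` for all integers `t ≥ t_0` and all real `q ≥ q_0`. -/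
theorem stmt9 (k : ℕ) (hk : 1 ≤ k) (f g : Fin k → Polynomial ℝ) (M : ℝ)
    (t0 z q0 : ℤ) (htz : t0 ≤ z) (hq0 : 1 < q0)
    (h1 : ∀ t : ℤ, t0 ≤ t → ∀ i, 0 ≤ (f i).eval (t : ℝ) ∧ 0 ≤ (g i).eval (t : ℝ))
    (h2 : ∀ x : ℝ, (z : ℝ) ≤ x → ∀ i,
      (derivative (f i)).eval x ≤
        (f i).eval x * (derivative (g i)).eval x * Real.log (q0 : ℝ))
    (h3 : ∀ t : ℤ, t0 ≤ t → t ≤ z →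
      (∑ i, (f i).eval (t : ℝ) * (q0 : ℝ) ^ (-(g i).eval (t : ℝ))) < M) :
    ∀ t : ℤ, t0 ≤ t → ∀ q : ℝ, (q0 : ℝ) ≤ q →
      (∑ i, (f i).eval (t : ℝ) * q ^ (-(g i).eval (t : ℝ))) < M := by
  have hq0R : (1 : ℝ) < (q0 : ℝ) := by exact_mod_cast hq0
  have hq0pos : (0 : ℝ) < (q0 : ℝ) := lt_trans one_pos hq0R
  set L : ℝ := Real.log (q0 : ℝ) with hL
  -- the function F x = f(q0, x) as a real function
  set F : ℝ → ℝ := fun x => ∑ i : Fin k, (f i).eval x * Real.exp (-(g i).eval x * L)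
    with hFdef
  -- derivative of F
  have hF : ∀ x : ℝ, HasDerivAt F
      (∑ i : Fin k, ((derivative (f i)).eval x * Real.exp (-(g i).eval x * L)
        + (f i).eval x * ((-(derivative (g i)).eval x * L) * Real.exp (-(g i).eval x * L)))) x := by
    intro x
    apply HasDerivAt.fun_sum
    intro i _
    have hfi : HasDerivAt (fun y => (f i).eval y) ((derivative (f i)).eval x) x :=
      (f i).hasDerivAt x
    have hgi : HasDerivAt (fun y => -(g i).eval y * L) (-(derivative (g i)).eval x * L) x := by
      exact (((g i).hasDerivAt x).neg).mul_const L
    have hexp : HasDerivAt (fun y => Real.exp (-(g i).eval y * L))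
        ((-(derivative (g i)).eval x * L) * Real.exp (-(g i).eval x * L)) x := by
      have := hgi.exp
      simpa [mul_comm] using this
    exact hfi.mul hexp
  -- F is antitone on [z, ∞)
  have hanti : AntitoneOn F (Set.Ici (z : ℝ)) := by
    apply antitoneOn_of_deriv_nonpos (convex_Ici _)
    · apply Continuous.continuousOn
      apply continuous_finset_sum
      intro i _
      exact ((f i).continuous).mul
        (Real.continuous_exp.comp (((g i).continuous.neg).mul continuous_const))
    · intro x _
      exact (hF x).differentiableAt.differentiableWithinAt
    · intro x hx
      rw [interior_Ici] at hx
      rw [(hF x).deriv]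
      apply Finset.sum_nonpos
      intro i _
      have h2' := h2 x (le_of_lt hx) i
      have hepos : 0 < Real.exp (-(g i).eval x * L) := Real.exp_pos _
      have : (derivative (f i)).eval x * Real.exp (-(g i).eval x * L)
          + (f i).eval x * ((-(derivative (g i)).eval x * L) * Real.exp (-(g i).eval x * L))
          = ((derivative (f i)).eval x - (f i).eval x * (derivative (g i)).eval x * L)
            * Real.exp (-(g i).eval x * L) := by ring
      rw [this]
      exact mul_nonpos_of_nonpos_of_nonneg (by linarith) hepos.le
  -- rpow at q0 equals exp form
  have hrw : ∀ x : ℝ, (∑ i : Fin k, (f i).eval x * (q0 : ℝ) ^ (-(g i).eval x)) = F x := by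
    intro x
    apply Finset.sum_congr rfl
    intro i _
    rw [Real.rpow_def_of_pos hq0pos]
    ring_nf
    rw [hL, mul_comm (eval x (g i))]
  -- F t < M for all integers t ≥ t0
  have key : ∀ t : ℤ, t0 ≤ t → F (t : ℝ) < M := by
    intro t ht
    by_cases hcase : t ≤ z
    · rw [← hrw]; exact h3 t ht hcase
    · push_neg at hcase
      have hzt : (z : ℝ) ≤ (t : ℝ) := by exact_mod_cast hcase.le
      have := hanti (Set.self_mem_Ici) hzt hzt
      have hFz : F (z : ℝ) < M := by rw [← hrw]; exact h3 z htz le_rfl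
      linarith
  intro t ht q hq
  have hqpos : (0 : ℝ) < q := lt_of_lt_of_le hq0pos hq
  calc (∑ i, (f i).eval (t : ℝ) * q ^ (-(g i).eval (t : ℝ)))
      ≤ ∑ i, (f i).eval (t : ℝ) * (q0 : ℝ) ^ (-(g i).eval (t : ℝ)) := by
        apply Finset.sum_le_sum
        intro i _
        obtain ⟨hfi, hgi⟩ := h1 t ht i
        apply mul_le_mul_of_nonneg_left _ hfi
        rw [Real.rpow_neg hq0pos.le, Real.rpow_neg hqpos.le]
        apply inv_anti₀
        · exact Real.rpow_pos_of_pos hq0pos _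
        · exact Real.rpow_le_rpow hq0pos.le hq hgi
    _ = F (t : ℝ) := hrw _
    _ < M := key t ht
end

section
/- Let q be a prime power and n, d integers with either (n ≥ 3 and d ≥ 2) or (n = 2 and d ≥ 7), and set m = binom(n+d, n). Let R denote the number of nonzero F ∈ S_{n,d}(F_q) that are reducible in F_q[x_0, …, x_n], and let t = R/(q^m − 1). Then t·(d − 1) ≤ 1/(2q); equivalently, 2q(d−1)·R ≤ q^m − 1. -/
noncomputable def Psi (σ R : Type*) [CommSemiring R] :
    MvPolynomial σ R →ₐ[R] Polynomial (MvPolynomial σ R) :=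
  MvPolynomial.aeval (fun i => Polynomial.C (MvPolynomial.X i) * Polynomial.X)

open MvPolynomial Polynomial Finsupp in
lemma Psi_monomial (σ R : Type*) [CommSemiring R] (s : σ →₀ ℕ) (c : R) :
    Psi σ R (MvPolynomial.monomial s c)
      = Polynomial.C (MvPolynomial.monomial s c) * Polynomial.X ^ (Finsupp.degree s) := by
  rw [Psi, MvPolynomial.aeval_monomial]
  simp only [mul_pow, ← Polynomial.C_pow]
  rw [Finsupp.prod, Finset.prod_mul_distrib, ← map_prod, Finset.prod_pow_eq_pow_sum]
  rw [MvPolynomial.monomial_eq, map_mul, Finsupp.prod, Finsupp.degree]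
  simp [MvPolynomial.algebraMap_eq, mul_assoc]
  rfl

open MvPolynomial Polynomial in
lemma Psi_homog {σ R : Type*} [CommSemiring R] {p : MvPolynomial σ R} {k : ℕ}
    (hp : p.IsHomogeneous k) :
    Psi σ R p = Polynomial.C p * Polynomial.X ^ k := by
  conv_lhs => rw [p.as_sum]
  rw [map_sum]
  conv_rhs => rw [p.as_sum]
  rw [map_sum, Finset.sum_mul]
  refine Finset.sum_congr rfl fun s hs => ?_
  rw [Psi_monomial]
  congr 1
  rw [show Finsupp.degree s = k from ?_]
  rw [Finsupp.degree_eq_weight_one]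
  exact hp (mem_support_iff.1 hs)

open MvPolynomial Polynomial in
lemma coeff_Psi {σ R : Type*} [CommSemiring R] (p : MvPolynomial σ R) (j : ℕ) :
    (Psi σ R p).coeff j = homogeneousComponent j p := by
  conv_lhs => rw [← p.sum_homogeneousComponent]
  rw [map_sum, Polynomial.finset_sum_coeff]
  have key : ∀ i, (Psi σ R (homogeneousComponent i p)).coeff j
      = if i = j then homogeneousComponent i p else 0 := by
    intro i
    rw [Psi_homog (homogeneousComponent_isHomogeneous i p), Polynomial.C_mul_X_pow_eq_monomial,
      Polynomial.coeff_monomial]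
  simp only [key]
  rw [Finset.sum_ite_eq' (Finset.range (p.totalDegree + 1)) j]
  split_ifs with hj
  · rfl
  · rw [eq_comm, homogeneousComponent_eq_zero]
    simpa using hj

open MvPolynomial Polynomial in
lemma Psi_ne_zero {σ R : Type*} [CommSemiring R] {p : MvPolynomial σ R} (hp : p ≠ 0) :
    Psi σ R p ≠ 0 := by
  intro h
  apply hp
  conv_lhs => rw [← p.sum_homogeneousComponent]
  refine Finset.sum_eq_zero fun i _ => ?_
  rw [← coeff_Psi, h, Polynomial.coeff_zero]

open MvPolynomial Polynomial in
lemma homog_of_monomial_psi {σ R : Type*} [CommSemiring R] {p : MvPolynomial σ R} (hp : p ≠ 0)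
    (h : (Psi σ R p).natDegree = (Psi σ R p).natTrailingDegree) :
    p.IsHomogeneous (Psi σ R p).natDegree := by
  set i := (Psi σ R p).natDegree with hi
  have hzero : ∀ j, j ≠ i → homogeneousComponent j p = 0 := by
    intro j hj
    rw [← coeff_Psi]
    rcases lt_or_gt_of_ne hj with hlt | hgt
    · exact Polynomial.coeff_eq_zero_of_lt_natTrailingDegree (h ▸ hlt)
    · exact Polynomial.coeff_eq_zero_of_natDegree_lt hgt
  have hp' : p = homogeneousComponent i p := by
    conv_lhs => rw [← p.sum_homogeneousComponent]
    rcases Finset.mem_range.2 (Nat.lt_succ_of_le (le_refl p.totalDegree)) with _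
    by_cases hmem : i ∈ Finset.range (p.totalDegree + 1)
    · exact Finset.sum_eq_single_of_mem i hmem (fun j _ hj => hzero j hj)
    · exfalso
      apply hp
      conv_lhs => rw [← p.sum_homogeneousComponent]
      refine Finset.sum_eq_zero fun j hjm => ?_
      exact hzero j (fun hji => hmem (hji ▸ hjm))
  rw [hp']
  exact homogeneousComponent_isHomogeneous i p

open MvPolynomial Polynomial in
lemma homog_factors {σ R : Type*} [CommRing R] [IsDomain R] {f a b : MvPolynomial σ R} {dd : ℕ}
    (hf : f.IsHomogeneous dd) (hf0 : f ≠ 0) (hab : f = a * b) :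
    a.IsHomogeneous a.totalDegree ∧ b.IsHomogeneous b.totalDegree ∧
      a.totalDegree + b.totalDegree = dd := by
  have ha0 : a ≠ 0 := fun h => hf0 (by simp [hab, h])
  have hb0 : b ≠ 0 := fun h => hf0 (by simp [hab, h])
  have hPa := Psi_ne_zero (σ := σ) (R := R) ha0
  have hPb := Psi_ne_zero (σ := σ) (R := R) hb0
  have hPf : Psi σ R f = Polynomial.C f * Polynomial.X ^ dd := Psi_homog hf
  have hmul : Psi σ R f = Psi σ R a * Psi σ R b := by rw [hab, map_mul]
  have hdeg : (Psi σ R a).natDegree + (Psi σ R b).natDegree = dd := by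
    have := Polynomial.natDegree_mul hPa hPb
    rw [← hmul, hPf, Polynomial.C_mul_X_pow_eq_monomial,
      Polynomial.natDegree_monomial_eq _ hf0] at this
    omega
  have htr : (Psi σ R a).natTrailingDegree + (Psi σ R b).natTrailingDegree = dd := by
    have := Polynomial.natTrailingDegree_mul hPa hPb
    rw [← hmul, hPf, Polynomial.C_mul_X_pow_eq_monomial,
      Polynomial.natTrailingDegree_monomial hf0] at this
    omega
  have hta := Polynomial.natTrailingDegree_le_natDegree (Psi σ R a)
  have htb := Polynomial.natTrailingDegree_le_natDegree (Psi σ R b)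
  have hea : (Psi σ R a).natDegree = (Psi σ R a).natTrailingDegree := by omega
  have heb : (Psi σ R b).natDegree = (Psi σ R b).natTrailingDegree := by omega
  have Ha := homog_of_monomial_psi ha0 hea
  have Hb := homog_of_monomial_psi hb0 heb
  have hta' := Ha.totalDegree ha0
  have htb' := Hb.totalDegree hb0
  refine ⟨hta' ▸ Ha, htb' ▸ Hb, by omega⟩


open MvPolynomial in
/-- The set of exponent vectors of degree `k` is equivalent to `Sym (Fin N) k`. -/
noncomputable def degSetEquiv (N k : ℕ) :
    {d : Fin N →₀ ℕ // Finsupp.degree d = k} ≃ Sym (Fin N) k :=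
  Equiv.subtypeEquiv (Finsupp.orderIsoMultiset (ι := Fin N)).toEquiv (by
    intro d
    show Finsupp.degree d = k ↔ Multiset.card (Finsupp.toMultiset d) = k
    rw [Finsupp.card_toMultiset]
    rfl)

open MvPolynomial in
noncomputable def homogBasis (F : Type*) [Field F] (N k : ℕ) :
    Module.Basis {d : Fin N →₀ ℕ // Finsupp.degree d = k} F
      (homogeneousSubmodule (Fin N) F k) :=
  (MvPolynomial.basisRestrictSupport F {d | Finsupp.degree d = k}).map
    (LinearEquiv.ofEq _ _ (homogeneousSubmodule_eq_finsupp_supported (Fin N) F k).symm)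

open MvPolynomial in
noncomputable instance degSetFintype (N k : ℕ) :
    Fintype {d : Fin N →₀ ℕ // Finsupp.degree d = k} :=
  Fintype.ofEquiv _ (degSetEquiv N k).symm

lemma card_degSet (N k : ℕ) :
    Fintype.card {d : Fin N →₀ ℕ // Finsupp.degree d = k} = Nat.multichoose N k := by
  rw [Fintype.card_congr (degSetEquiv N k), Sym.card_sym_eq_multichoose, Fintype.card_fin]

open MvPolynomial in
noncomputable instance homogFintype (F : Type*) [Field F] [Fintype F] (N k : ℕ) :
    Fintype (homogeneousSubmodule (Fin N) F k) :=
  Module.fintypeOfFintype (homogBasis F N k)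

open MvPolynomial in
lemma card_homogSub (F : Type*) [Field F] [Fintype F] (N k : ℕ) :
    Fintype.card (homogeneousSubmodule (Fin N) F k)
      = Fintype.card F ^ Nat.multichoose N k := by
  rw [Module.card_fintype (homogBasis F N k), card_degSet]

open MvPolynomial in
noncomputable def homogNeEquiv (F : Type*) [Field F] (N k : ℕ) :
    {p : MvPolynomial (Fin N) F // p.IsHomogeneous k ∧ p ≠ 0}
      ≃ {x : homogeneousSubmodule (Fin N) F k // x ≠ 0} where
  toFun p := ⟨⟨p.1, (mem_homogeneousSubmodule k p.1).2 p.2.1⟩, by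
    intro h
    exact p.2.2 (by simpa [Submodule.mk_eq_zero] using h)⟩
  invFun x := ⟨x.1.1, ⟨(mem_homogeneousSubmodule k x.1.1).1 x.1.2, by
    intro h
    apply x.2
    exact Subtype.ext h⟩⟩
  left_inv p := rfl
  right_inv x := rfl

open MvPolynomial in
lemma card_homogNe (F : Type*) [Field F] [Fintype F] (N k : ℕ) :
    Nat.card {p : MvPolynomial (Fin N) F // p.IsHomogeneous k ∧ p ≠ 0}
      = Fintype.card F ^ Nat.multichoose N k - 1 := by
  classical
  rw [Nat.card_congr (homogNeEquiv F N k), Nat.card_eq_fintype_card]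
  have : Fintype.card {x : homogeneousSubmodule (Fin N) F k // ¬ (x = 0)}
      = Fintype.card (homogeneousSubmodule (Fin N) F k)
        - Fintype.card {x : homogeneousSubmodule (Fin N) F k // x = 0} :=
    Fintype.card_subtype_compl _
  simp only [ne_eq]
  rw [this, Fintype.card_subtype_eq, card_homogSub]

open MvPolynomial in
instance homogNeFinite (F : Type*) [Field F] [Fintype F] (N k : ℕ) :
    Finite {p : MvPolynomial (Fin N) F // p.IsHomogeneous k ∧ p ≠ 0} :=
  Finite.of_equiv _ (homogNeEquiv F N k).symm


lemma L_geom {q : ℕ} (hq : 2 ≤ q) (s : ℕ → ℕ) :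
    ∀ t a, (∀ e, a ≤ e → e < a + t → s (e + 1) + 1 ≤ s e) →
      ∑ e ∈ Finset.Icc a (a + t), q ^ s e < 2 * q ^ s a := by
  intro t
  induction t with
  | zero =>
    intro a _
    simp only [Nat.add_zero, Finset.Icc_self, Finset.sum_singleton]
    have : 0 < q ^ s a := Nat.pow_pos (by omega)
    omega
  | succ t ih =>
    intro a hdec
    have hab : a ≤ a + (t + 1) := by omega
    rw [← Finset.insert_Icc_add_one_left_eq_Icc hab, Finset.sum_insert (by simp)]
    have h1 : ∑ e ∈ Finset.Icc (a + 1) (a + 1 + t), q ^ s e < 2 * q ^ s (a + 1) :=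
      ih (a + 1) (fun e he1 he2 => hdec e (by omega) (by omega))
    have h2 : 2 * q ^ s (a + 1) ≤ q ^ s a := by
      have hs : s (a + 1) + 1 ≤ s a := hdec a le_rfl (by omega)
      calc 2 * q ^ s (a + 1) ≤ q * q ^ s (a + 1) := by
            exact Nat.mul_le_mul_right _ hq
        _ = q ^ (s (a + 1) + 1) := by ring
        _ ≤ q ^ s a := Nat.pow_le_pow_right (by omega) hs
    have : a + 1 + t = a + (t + 1) := by omega
    rw [this] at h1
    omega

lemma L_2d {q : ℕ} (hq : 2 ≤ q) : ∀ d, 7 ≤ d → 2 * (d - 1) * (q ^ 3 + 1) < q ^ d := by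
  intro d hd
  induction d with
  | zero => omega
  | succ d ih =>
    rcases Nat.lt_or_ge d 7 with h7 | h7
    · -- d + 1 = 7
      have hd7 : d = 6 := by omega
      subst hd7
      rcases Nat.lt_or_ge q 3 with h3 | h3
      · have : q = 2 := by omega
        subst this; norm_num
      · have h1 : 2 * (7 - 1) * (q ^ 3 + 1) = 12 * q ^ 3 + 12 := by norm_num; ring
        have h2 : (12 : ℕ) ≤ 12 * q ^ 3 := Nat.le_mul_of_pos_right _ (Nat.pow_pos (by omega))
        have h3' : 24 * q ^ 3 ≤ q ^ 4 * q ^ 3 := by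
          have : 24 ≤ q ^ 4 := by
            calc (24 : ℕ) ≤ 3 ^ 3 := by norm_num
            _ ≤ q ^ 3 := Nat.pow_le_pow_left h3 3
            _ ≤ q ^ 4 := Nat.pow_le_pow_right (by omega) (by omega)
          exact Nat.mul_le_mul_right _ this
        have h4 : q ^ 4 * q ^ 3 = q ^ 7 := by ring
        have h5 : q ^ (6 + 1) = q ^ 7 := by norm_num
        have hb : 27 ≤ q ^ 3 := by
          calc (27:ℕ) = 3 ^ 3 := by norm_num
          _ ≤ q ^ 3 := Nat.pow_le_pow_left h3 3
        omega
    · have h1 := ih h7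
      have h2 : 2 * (q ^ 3 + 1) ≤ q ^ d := by
        calc 2 * (q ^ 3 + 1) ≤ 4 * q ^ 3 := by
              have : 1 ≤ q ^ 3 := Nat.one_le_pow _ _ (by omega)
              omega
          _ ≤ 2 ^ 2 * q ^ 3 := by norm_num
          _ ≤ q ^ 2 * q ^ 3 := Nat.mul_le_mul_right _ (Nat.pow_le_pow_left hq 2)
          _ = q ^ 5 := by ring
          _ ≤ q ^ d := Nat.pow_le_pow_right (by omega) (by omega)
      have h3 : 2 * q ^ d ≤ q ^ (d + 1) := by
        have : q ^ (d + 1) = q * q ^ d := by ring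
        rw [this]
        exact Nat.mul_le_mul_right _ hq
      have hexp : 2 * (d + 1 - 1) * (q ^ 3 + 1) = 2 * (d - 1) * (q ^ 3 + 1) + 2 * (q ^ 3 + 1) := by
        have : d + 1 - 1 = (d - 1) + 1 := by omega
        rw [this]; ring
      omega

lemma L_4d {q : ℕ} (hq : 2 ≤ q) : ∀ d, 2 ≤ d → 4 * (d - 1) ≤ q ^ (d + 1) := by
  intro d hd
  have h2 : 4 * (d - 1) ≤ 2 ^ (d + 1) := by
    induction d with
    | zero => omega
    | succ d ih =>
      rcases Nat.lt_or_ge d 2 with h | h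
      · interval_cases d
        · norm_num
        · norm_num
      · have := ih h
        have h4 : (4 : ℕ) ≤ 2 ^ (d + 1) := by
          calc (4:ℕ) = 2^2 := by norm_num
          _ ≤ 2 ^ (d+1) := Nat.pow_le_pow_right (by omega) (by omega)
        have : (2:ℕ) ^ (d + 2) = 2 * 2 ^ (d+1) := by ring
        have hx : 4 * (d + 1 - 1) = 4 * (d-1) + 4 := by omega
        omega
  exact h2.trans (Nat.pow_le_pow_left hq _)

lemma L_choose_mono_half (N : ℕ) : ∀ j, j ≤ N / 2 → ∀ i, i ≤ j → N.choose i ≤ N.choose j := by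
  intro j
  induction j with
  | zero =>
    intro _ i hi
    have : i = 0 := by omega
    subst this; rfl
  | succ j ih =>
    intro hj i hi
    rcases Nat.lt_or_ge i (j + 1) with h | h
    · calc N.choose i ≤ N.choose j := ih (by omega) i (by omega)
        _ ≤ N.choose (j + 1) := Nat.choose_le_succ_of_lt_half_left (by omega)
    · have : i = j + 1 := by omega
      subst this; rfl

lemma L_choose2 {N k : ℕ} (h2 : 2 ≤ k) (hk : k + 2 ≤ N) : N.choose 2 ≤ N.choose k := by
  rcases le_or_gt k (N / 2) with h | h
  · exact L_choose_mono_half N k h 2 h2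
  · have hsym : N.choose k = N.choose (N - k) := (Nat.choose_symm (by omega)).symm
    rw [hsym]
    exact L_choose_mono_half N (N - k) (by omega) 2 (by omega)

lemma L_chooseBig {n d : ℕ} (hn : 3 ≤ n) (hd : 3 ≤ d) :
    n + d + 3 ≤ (n + d - 1).choose (n - 1) := by
  set N := n + d - 1 with hN
  have h5 : 5 ≤ N := by omega
  have h1 : N.choose 2 ≤ N.choose (n - 1) := L_choose2 (by omega) (by omega)
  have h2 : N + 4 ≤ N.choose 2 := by
    rw [Nat.choose_two_right]
    have : 2 * (N + 4) ≤ N * (N - 1) := by nlinarith [Nat.sub_add_cancel (show 1 ≤ N by omega)]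
    omega
  omega

lemma L_final {q n d : ℕ} (hq : 2 ≤ q) (h : (3 ≤ n ∧ 2 ≤ d) ∨ (n = 2 ∧ 7 ≤ d)) :
    2 * q * (d - 1) * (∑ e ∈ Finset.Icc 1 (d / 2),
        (q ^ ((n + e).choose n) - 1) * (q ^ ((n + (d - e)).choose n) - 1))
      ≤ q ^ ((n + d).choose n) - 1 := by
  have hn2 : 2 ≤ n := by omega
  have hd2 : 2 ≤ d := by omega
  obtain ⟨m, rfl⟩ : ∃ m, n = m + 2 := ⟨n - 2, by omega⟩
  set n := m + 2 with hn
  set M : ℕ → ℕ := fun e => (n + e).choose n with hM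
  set C1 : ℕ → ℕ := fun a => (n + a).choose (m + 1) with hC1
  set T : ℕ → ℕ := fun e => (q ^ M e - 1) * (q ^ M (d - e) - 1) with hT
  set s : ℕ → ℕ := fun e => M e + M (d - e) with hs
  set k := d / 2 with hk
  show 2 * q * (d - 1) * (∑ e ∈ Finset.Icc 1 k, T e) ≤ q ^ M d - 1
  have hk1 : 1 ≤ k := by omega
  -- Pascal
  have hP : ∀ a, M (a + 1) = M a + C1 a := by
    intro a
    show (n + (a + 1)).choose ((m + 1) + 1)
      = (n + a).choose ((m + 1) + 1) + (n + a).choose (m + 1)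
    have h1 : n + (a + 1) = (n + a) + 1 := by omega
    rw [h1, Nat.choose_succ_succ]
    simp only [Nat.succ_eq_add_one]
    omega
  -- strict monotonicity of C1
  have hC1mono : ∀ a b, a < b → C1 a + 1 ≤ C1 b := by
    intro a b hab
    have key : C1 (a + 1) = (n + a).choose m + C1 a := by
      show (n + (a + 1)).choose (m + 1) = (n + a).choose m + (n + a).choose (m + 1)
      have h1 : n + (a + 1) = (n + a) + 1 := by omega
      rw [h1, Nat.choose_succ_succ]
    have hmono : C1 (a + 1) ≤ C1 b := by
      show (n + (a + 1)).choose (m + 1) ≤ (n + b).choose (m + 1)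
      exact Nat.choose_le_choose _ (by omega)
    have hpos : 0 < (n + a).choose m := Nat.choose_pos (by omega)
    omega
  -- degree sum decrement
  have hdec : ∀ e, 1 ≤ e → e < k → s (e + 1) + 1 ≤ s e := by
    intro e he1 hek
    have h2e : 2 * e + 2 ≤ d := by omega
    have hde : d - e = (d - (e + 1)) + 1 := by omega
    show M (e + 1) + M (d - (e + 1)) + 1 ≤ M e + M (d - e)
    rw [hde, hP, hP]
    have := hC1mono e (d - (e + 1)) (by omega)
    omega
  -- termwise bound
  have hTb : ∀ e, T e ≤ q ^ s e := by
    intro e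
    show (q ^ M e - 1) * (q ^ M (d - e) - 1) ≤ q ^ (M e + M (d - e))
    rw [pow_add]
    exact Nat.mul_le_mul (Nat.sub_le _ _) (Nat.sub_le _ _)
  have hM1 : M 1 = n + 1 := Nat.choose_succ_self_right n
  have hq1 : ∀ x : ℕ, 1 ≤ q ^ x := fun x => Nat.one_le_pow _ _ (by omega)
  rcases eq_or_lt_of_le hd2 with hd2' | hd3
  · -- Case d = 2
    have hd2'' : d = 2 := hd2'.symm
    subst hd2''
    have hn3 : 3 ≤ n := by omega
    have hk1' : k = 1 := rfl
    rw [hk1', Finset.Icc_self, Finset.sum_singleton]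
    have hM2 : 2 * n + 4 ≤ M 2 := by
      show 2 * n + 4 ≤ (n + 2).choose n
      have hsym : (n + 2).choose n = (n + 2).choose 2 := by
        have := Nat.choose_symm (show 2 ≤ n + 2 by omega)
        simpa using this
      rw [hsym, Nat.choose_two_right]
      have he : n + 2 - 1 = n + 1 := by omega
      rw [he]
      have hexp : (n + 2) * (n + 1) = n * n + 3 * n + 2 := by ring
      have hnn : 3 * n ≤ n * n := Nat.mul_le_mul_right n hn3
      omega
    obtain ⟨b, hb⟩ : ∃ b, q ^ M 1 = b + 1 := ⟨q ^ M 1 - 1, by have := hq1 (M 1); omega⟩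
    have hTe : T 1 = b * b := by
      show (q ^ M 1 - 1) * (q ^ M (2 - 1) - 1) = b * b
      have h21 : (2 : ℕ) - 1 = 1 := rfl
      rw [h21, hb]
      simp
    rw [hTe]
    have key : 2 * q * (b * b) + 1 ≤ q ^ M 2 := by
      have e1 : (b + 1) * (b + 1) = q ^ (2 * n + 2) := by
        rw [← hb, ← pow_add, hM1]
        congr 1
        omega
      have ex : (b + 1) * (b + 1) = b * b + 2 * b + 1 := by ring
      have e2 : 2 * q * (q ^ (2 * n + 2)) = 2 * (q ^ (2 * n + 3)) := by
        have : (2 * n + 3) = (2 * n + 2) + 1 := rfl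
        rw [this, pow_succ]
        ring
      have e3 : 2 * (q ^ (2 * n + 3)) ≤ q ^ (2 * n + 4) := by
        have h1 : q ^ (2 * n + 4) = q * q ^ (2 * n + 3) := by
          rw [← pow_succ']
        rw [h1]
        exact Nat.mul_le_mul_right _ hq
      have e4 : q ^ (2 * n + 4) ≤ q ^ M 2 := Nat.pow_le_pow_right (by omega) hM2
      have ee : 2 * q * (b * b + 2 * b + 1) = 2 * q * (b * b) + 4 * (q * b) + 2 * q := by ring
      have ef : 2 * q * ((b + 1) * (b + 1)) = 2 * q * (q ^ (2 * n + 2)) := by rw [e1]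
      rw [ex, ee] at ef
      omega
    have hm2 := hq1 (M 2)
    have h21 : (2 : ℕ) - 1 = 1 := rfl
    rw [h21]
    have hgg : 2 * q * 1 * (b * b) = 2 * q * (b * b) := by ring
    omega
  · -- d ≥ 3
    have hA1 : 1 ≤ 2 * q * (d - 1) := by
      have h1 : 1 ≤ d - 1 := by omega
      have : 1 * 1 * 1 ≤ 2 * q * (d - 1) :=
        Nat.mul_le_mul (Nat.mul_le_mul (by omega) (by omega)) h1
      omega
    rcases h with ⟨hn3, _⟩ | ⟨hn2', hd7⟩
    · -- Case n ≥ 3, d ≥ 3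
      obtain ⟨t, ht⟩ : ∃ t, k = 1 + t := ⟨k - 1, by omega⟩
      have hgeom : ∑ e ∈ Finset.Icc 1 (1 + t), q ^ s e < 2 * q ^ s 1 :=
        L_geom hq s t 1 (fun e he1 he2 => hdec e he1 (by omega))
      rw [← ht] at hgeom
      have hsum1 : ∑ e ∈ Finset.Icc 1 k, T e ≤ ∑ e ∈ Finset.Icc 1 k, q ^ s e :=
        Finset.sum_le_sum fun e _ => hTb e
      have hSd : s 1 + d + 2 ≤ M d := by
        have hPd : M d = M (d - 1) + C1 (d - 1) := by
          have h1 : d = (d - 1) + 1 := by omega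
          conv_lhs => rw [h1]
          rw [hP]
        have hCb : n + d + 3 ≤ C1 (d - 1) := by
          have hbig := L_chooseBig hn3 (show 3 ≤ d by omega)
          have he : C1 (d - 1) = (n + d - 1).choose (n - 1) := by
            show (n + (d - 1)).choose (m + 1) = (n + d - 1).choose (n - 1)
            congr 1 <;> omega
          omega
        have hs1 : s 1 = M 1 + M (d - 1) := rfl
        omega
      set A := 2 * q * (d - 1) with hA
      set X := q ^ s 1 with hX
      set SQ := ∑ e ∈ Finset.Icc 1 k, q ^ s e with hSQ
      set ST := ∑ e ∈ Finset.Icc 1 k, T e with hST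
      have c1 : A * ST ≤ A * SQ := Nat.mul_le_mul_left _ hsum1
      have c2 : A * (SQ + 1) ≤ A * (2 * X) := Nat.mul_le_mul_left _ (by omega)
      have c3 : A * (2 * X) ≤ q ^ M d := by
        have h4 : 4 * (d - 1) ≤ q ^ (d + 1) := L_4d hq d (by omega)
        have e1 : A * (2 * X) = (4 * (d - 1)) * (q * X) := by rw [hA]; ring
        have e2 : q * X = q ^ (1 + s 1) := by rw [pow_add, pow_one, hX]
        have e3 : (4 * (d - 1)) * (q * X) ≤ q ^ (d + 1) * q ^ (1 + s 1) := by
          rw [e2]; exact Nat.mul_le_mul_right _ h4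
        have e4 : q ^ (d + 1) * q ^ (1 + s 1) = q ^ (s 1 + d + 2) := by
          rw [← pow_add]; congr 1; omega
        have e5 : q ^ (s 1 + d + 2) ≤ q ^ M d := Nat.pow_le_pow_right (by omega) hSd
        omega
      have c4 : A * (SQ + 1) = A * SQ + A := by ring
      omega
    · -- Case n = 2, d ≥ 7
      obtain rfl : m = 0 := by omega
      have hk3 : 3 ≤ k := by omega
      have hCd : ∀ a, C1 a = a + 2 := by
        intro a
        show (n + a).choose 1 = a + 2
        rw [Nat.choose_one_right]
        omega
      have hPd1 : M (d - 1) = M (d - 2) + C1 (d - 2) := by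
        have h1 : d - 1 = (d - 2) + 1 := by omega
        rw [h1, hP]
      have hPd : M d = M (d - 1) + C1 (d - 1) := by
        have h1 : d = (d - 1) + 1 := by omega
        conv_lhs => rw [h1]
        rw [hP]
      have hs1 : s 1 = M 1 + M (d - 1) := rfl
      have hs2 : s 2 = M 2 + M (d - 2) := rfl
      have hM2' : M 2 = 6 := rfl
      have hM1' : M 1 = 3 := by omega
      have hs21 : s 2 + 4 ≤ s 1 := by
        rw [hs1, hs2, hPd1, hCd]
        omega
      have hMd2 : M d + 2 = s 1 + d := by
        rw [hs1, hPd, hCd]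
        omega
      -- split the sum
      have hsplit : ∑ e ∈ Finset.Icc 1 k, T e = T 1 + ∑ e ∈ Finset.Icc 2 k, T e := by
        rw [← Finset.insert_Icc_add_one_left_eq_Icc hk1, Finset.sum_insert (by simp)]
        rfl
      obtain ⟨t, ht⟩ : ∃ t, k = 2 + t := ⟨k - 2, by omega⟩
      have hgeom : ∑ e ∈ Finset.Icc 2 (2 + t), q ^ s e < 2 * q ^ s 2 :=
        L_geom hq s t 2 (fun e he1 he2 => hdec e (by omega) (by omega))
      rw [← ht] at hgeom
      have hsum2 : ∑ e ∈ Finset.Icc 2 k, T e ≤ ∑ e ∈ Finset.Icc 2 k, q ^ s e :=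
        Finset.sum_le_sum fun e _ => hTb e
      set u := s 2 + 1 with hu
      obtain ⟨r, hr⟩ : ∃ r, s 1 = u + 3 + r := ⟨s 1 - u - 3, by omega⟩
      have h2X2 : 2 * q ^ s 2 ≤ q ^ u := by
        rw [hu, pow_succ]
        calc 2 * q ^ s 2 = q ^ s 2 * 2 := by ring
          _ ≤ q ^ s 2 * q := Nat.mul_le_mul_left _ hq
      have hST : ∑ e ∈ Finset.Icc 1 k, T e ≤ q ^ s 1 + q ^ u := by
        rw [hsplit]
        have := hTb 1
        omega
      have key : 2 * q * (d - 1) * (q ^ s 1 + q ^ u) ≤ q ^ M d - 1 := by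
        have e1 : q ^ s 1 = q ^ u * q ^ (3 + r) := by rw [hr, ← pow_add]; congr 1; omega
        have e2 : q ^ (3 + r) + 1 ≤ q ^ r * (q ^ 3 + 1) := by
          rw [Nat.mul_add, Nat.mul_one, ← pow_add]
          have h1 : q ^ (3 + r) = q ^ (r + 3) := by congr 1; omega
          have := hq1 r
          omega
        have e3 : 2 * q * (d - 1) * (q ^ s 1 + q ^ u)
            = (2 * (d - 1)) * (q ^ u * (q ^ (3 + r) + 1)) * q := by
          rw [e1]; ring
        have e4 : (2 * (d - 1)) * (q ^ u * (q ^ (3 + r) + 1)) * q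
            ≤ (2 * (d - 1)) * (q ^ u * (q ^ r * (q ^ 3 + 1))) * q := by
          have := Nat.mul_le_mul_left (q ^ u) e2
          have := Nat.mul_le_mul_left (2 * (d - 1)) this
          exact Nat.mul_le_mul_right _ this
        have e5 : (2 * (d - 1)) * (q ^ u * (q ^ r * (q ^ 3 + 1))) * q
            = (2 * (d - 1) * (q ^ 3 + 1)) * (q ^ (u + r + 1)) := by
          rw [pow_add, pow_add, pow_one]
          ring
        have e6 : (2 * (d - 1) * (q ^ 3 + 1)) * (q ^ (u + r + 1))
            ≤ (q ^ d - 1) * (q ^ (u + r + 1)) := by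
          have := L_2d hq d hd7
          exact Nat.mul_le_mul_right _ (by omega)
        have e7 : (q ^ d - 1) * (q ^ (u + r + 1)) = q ^ M d - q ^ (u + r + 1) := by
          rw [Nat.sub_mul, ← pow_add, Nat.one_mul]
          congr 2
          omega
        have := hq1 (u + r + 1)
        omega
      calc 2 * q * (d - 1) * (∑ e ∈ Finset.Icc 1 k, T e)
          ≤ 2 * q * (d - 1) * (q ^ s 1 + q ^ u) := Nat.mul_le_mul_left _ hST
        _ ≤ q ^ M d - 1 := key


/-- **Lemma (bound `t(d−1) ≤ 1/(2q)`).** Let `q` be a prime power, `F = F_q`, and `n, d`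
integers with `(n ≥ 3 and d ≥ 2)` or `(n = 2 and d ≥ 7)`; `m = (n+d).choose n`. If `R` is
the number of nonzero reducible homogeneous degree-`d` polynomials in `n+1` variables over
`F` and `t = R/(q^m − 1)`, then `t·(d−1) ≤ 1/(2q)`, i.e. `2q(d−1)·R ≤ q^m − 1`. -/
theorem stmt12 (q : ℕ) (hq : IsPrimePow q) (F : Type*) [Field F] [Fintype F]
    (hF : Fintype.card F = q) (n d : ℕ)
    (h : (3 ≤ n ∧ 2 ≤ d) ∨ (n = 2 ∧ 7 ≤ d)) :
    2 * q * (d - 1) *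
        Nat.card {f : MvPolynomial (Fin (n + 1)) F //
          f ∈ MvPolynomial.homogeneousSubmodule (Fin (n + 1)) F d ∧ f ≠ 0 ∧
          ∃ a b : MvPolynomial (Fin (n + 1)) F,
            0 < a.totalDegree ∧ 0 < b.totalDegree ∧ f = a * b} ≤
      q ^ ((n + d).choose n) - 1 := by
  classical
  have hq2 : 2 ≤ q := hq.two_le
  set k := d / 2 with hk
  have hcard : Nat.card {f : MvPolynomial (Fin (n + 1)) F //
      f ∈ MvPolynomial.homogeneousSubmodule (Fin (n + 1)) F d ∧ f ≠ 0 ∧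
      ∃ a b : MvPolynomial (Fin (n + 1)) F,
        0 < a.totalDegree ∧ 0 < b.totalDegree ∧ f = a * b}
      ≤ ∑ e ∈ Finset.Icc 1 k,
          (q ^ ((n + e).choose n) - 1) * (q ^ ((n + (d - e)).choose n) - 1) := by
    have ex : ∀ f : {f : MvPolynomial (Fin (n + 1)) F //
        f ∈ MvPolynomial.homogeneousSubmodule (Fin (n + 1)) F d ∧ f ≠ 0 ∧
        ∃ a b : MvPolynomial (Fin (n + 1)) F,
          0 < a.totalDegree ∧ 0 < b.totalDegree ∧ f = a * b},
        ∃ x : (e : (Finset.Icc 1 k : Finset ℕ)) ×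
          ({p : MvPolynomial (Fin (n + 1)) F // p.IsHomogeneous (e : ℕ) ∧ p ≠ 0} ×
           {p : MvPolynomial (Fin (n + 1)) F // p.IsHomogeneous (d - (e : ℕ)) ∧ p ≠ 0}),
        f.1 = x.2.1.1 * x.2.2.1 := by
      rintro ⟨f, hmem, hne, a, b, ha, hb, hfab⟩
      have hfh : f.IsHomogeneous d := (MvPolynomial.mem_homogeneousSubmodule d f).1 hmem
      obtain ⟨Ha, Hb, Hsum⟩ := homog_factors hfh hne hfab
      have ha0 : a ≠ 0 := fun hz => hne (by rw [hfab, hz, zero_mul])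
      have hb0 : b ≠ 0 := fun hz => hne (by rw [hfab, hz, mul_zero])
      rcases le_total a.totalDegree b.totalDegree with hcmp | hcmp
      · have hmem1 : a.totalDegree ∈ Finset.Icc 1 k := by
          rw [Finset.mem_Icc]
          constructor
          · omega
          · omega
        have hbd : d - a.totalDegree = b.totalDegree := by omega
        exact ⟨⟨⟨a.totalDegree, hmem1⟩, ⟨⟨a, Ha, ha0⟩, ⟨b, hbd ▸ Hb, hb0⟩⟩⟩, hfab⟩
      · have hmem1 : b.totalDegree ∈ Finset.Icc 1 k := by
          rw [Finset.mem_Icc]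
          constructor
          · omega
          · omega
        have hbd : d - b.totalDegree = a.totalDegree := by omega
        exact ⟨⟨⟨b.totalDegree, hmem1⟩, ⟨⟨b, Hb, hb0⟩, ⟨a, hbd ▸ Ha, ha0⟩⟩⟩,
          by show f = b * a; rw [hfab]; ring⟩
    choose Φ hΦ using ex
    have hinj : Function.Injective Φ := by
      intro f1 f2 hgg
      apply Subtype.ext
      rw [hΦ f1, hΦ f2, hgg]
    have h1 := Nat.card_le_card_of_injective Φ hinj
    refine h1.trans ?_
    have hmc : ∀ e : ℕ, Fintype.card F ^ Nat.multichoose (n + 1) e - 1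
        = q ^ ((n + e).choose n) - 1 := by
      intro e
      rw [hF]
      congr 2
      rw [Nat.multichoose_eq]
      have h1' : n + 1 + e - 1 = n + e := by omega
      rw [h1']
      rw [← Nat.choose_symm (show e ≤ n + e by omega)]
      congr 1
      omega
    have hTcard : Nat.card ((e : (Finset.Icc 1 k : Finset ℕ)) ×
          ({p : MvPolynomial (Fin (n + 1)) F // p.IsHomogeneous (e : ℕ) ∧ p ≠ 0} ×
           {p : MvPolynomial (Fin (n + 1)) F // p.IsHomogeneous (d - (e : ℕ)) ∧ p ≠ 0}))
        = ∑ e ∈ Finset.Icc 1 k,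
            (q ^ ((n + e).choose n) - 1) * (q ^ ((n + (d - e)).choose n) - 1) := by
      haveI : ∀ (j : ℕ), Fintype {p : MvPolynomial (Fin (n + 1)) F // p.IsHomogeneous j ∧ p ≠ 0} :=
        fun j => Fintype.ofFinite _
      rw [Nat.card_eq_fintype_card, Fintype.card_sigma]
      rw [Finset.univ_eq_attach, ← Finset.sum_attach (Finset.Icc 1 k)
        (fun e => (q ^ ((n + e).choose n) - 1) * (q ^ ((n + (d - e)).choose n) - 1))]
      refine Finset.sum_congr rfl fun e _ => ?_
      rw [Fintype.card_prod, ← Nat.card_eq_fintype_card, ← Nat.card_eq_fintype_card,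
        card_homogNe, card_homogNe, hmc, hmc]
    rw [hTcard]
  exact le_trans (Nat.mul_le_mul_left _ hcard) (L_final hq2 h)
end

section
/- Let q be a prime power and n ≥ 2, d ≥ 2 integers. The number of irreducible nonconstant homogeneous polynomials of degree at most d in F_q[x_0, …, x_n], counted up to multiplication by nonzero scalars (equivalently, the number of irreducible hypersurfaces in ℙⁿ over F_q of degree at most d), is at most (1/(q−1))·(q^{binom(n+d,d)} − q^{binom(n+d−1,d−1)} + 2(q^{n+1} − 1)). -/
open MvPolynomial

section Aux

variable (F : Type*) [Field F] [Fintype F]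

private lemma aux_card_monomials (σ : Type*) [Fintype σ] [DecidableEq σ] (m : ℕ) :
    Nat.card {P : σ →₀ ℕ // Finsupp.degree P = m} = (Fintype.card σ + m - 1).choose m := by
  have e : {P : σ →₀ ℕ // Finsupp.degree P = m} ≃ Sym σ m :=
    (Equiv.subtypeEquivRight (fun P => Iff.rfl)).trans (Sym.equivNatSum σ m).symm
  rw [Nat.card_congr e, Nat.card_eq_fintype_card, Sym.card_sym_eq_choose]

private lemma aux_finite_monomials (σ : Type*) [Fintype σ] [DecidableEq σ] (m : ℕ) :
    Finite {P : σ →₀ ℕ // Finsupp.degree P = m} := by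
  have e : {P : σ →₀ ℕ // Finsupp.degree P = m} ≃ Sym σ m :=
    (Equiv.subtypeEquivRight (fun P => Iff.rfl)).trans (Sym.equivNatSum σ m).symm
  exact Finite.of_equiv _ e.symm

private lemma aux_card_homog (σ : Type*) [Fintype σ] [DecidableEq σ] (m : ℕ) :
    Nat.card {f : MvPolynomial σ F // f.IsHomogeneous m} =
      Fintype.card F ^ ((Fintype.card σ + m - 1).choose m) := by
  haveI := aux_finite_monomials σ m
  have e1 : {f : MvPolynomial σ F // f.IsHomogeneous m} ≃
      (homogeneousSubmodule σ F m : Submodule F (MvPolynomial σ F)) :=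
    Equiv.subtypeEquivRight (fun f => (mem_homogeneousSubmodule m f).symm)
  have e2 : (homogeneousSubmodule σ F m : Submodule F (MvPolynomial σ F)) ≃ₗ[F]
      ({d : σ →₀ ℕ | Finsupp.degree d = m} →₀ F) :=
    (LinearEquiv.ofEq _ _ (homogeneousSubmodule_eq_finsupp_supported σ F m)).trans
      (AddMonoidAlgebra.supportedEquivFinsupp _)
  haveI : Finite ({d : σ →₀ ℕ | Finsupp.degree d = m} : Set (σ →₀ ℕ)) :=
    aux_finite_monomials σ m
  have e3 : ({d : σ →₀ ℕ | Finsupp.degree d = m} →₀ F) ≃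
      (({d : σ →₀ ℕ | Finsupp.degree d = m} : Set (σ →₀ ℕ)) → F) :=
    Finsupp.equivFunOnFinite
  rw [Nat.card_congr ((e1.trans e2.toEquiv).trans e3), Nat.card_fun, Nat.card_eq_fintype_card]
  congr 1
  simpa only [Set.coe_setOf] using aux_card_monomials σ m

private lemma aux_finite_homog (σ : Type*) [Fintype σ] [DecidableEq σ] (m : ℕ) :
    Finite {f : MvPolynomial σ F // f.IsHomogeneous m} := by
  have h : 0 < Nat.card {f : MvPolynomial σ F // f.IsHomogeneous m} := by
    rw [aux_card_homog]
    exact Nat.pow_pos Fintype.card_pos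
  exact (Nat.card_pos_iff.mp h).2

private lemma aux_prime_X (n : ℕ) (i : Fin (n + 1)) :
    Prime (X i : MvPolynomial (Fin (n + 1)) F) := by
  have h0 : Prime (X 0 : MvPolynomial (Fin (n + 1)) F) := by
    rw [← MulEquiv.prime_iff (MvPolynomial.finSuccEquiv F n).toRingEquiv.toMulEquiv]
    show Prime ((MvPolynomial.finSuccEquiv F n) (X 0))
    rw [MvPolynomial.finSuccEquiv_X_zero]
    exact Polynomial.prime_X
  rw [← MulEquiv.prime_iff (renameEquiv F (Equiv.swap (0 : Fin (n + 1)) i)).toRingEquiv.toMulEquiv]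
    at h0
  have he : (renameEquiv F (Equiv.swap (0 : Fin (n + 1)) i)).toRingEquiv.toMulEquiv (X 0)
      = X i := by
    show (renameEquiv F (Equiv.swap (0 : Fin (n + 1)) i)) (X 0) = X i
    rw [renameEquiv_apply, rename_X, Equiv.swap_apply_left]
  rwa [he] at h0

end Aux

/-- **Lemma (bound on the number of irreducible hypersurfaces of degree at most `d`).**
Let `q` be a prime power, `F = F_q`, `n ≥ 2`, `d ≥ 2`. The number of irreducible
nonconstant homogeneous polynomials in `F[x_0,…,x_n]` of degree at most `d`, counted up to
multiplication by nonzero scalars (formalized as the number of `Associates`-classes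
containing an irreducible homogeneous polynomial of some degree `e` with `1 ≤ e ≤ d`), is
at most `(1/(q−1))·(q^binom(n+d,d) − q^binom(n+d−1,d−1) + 2(q^{n+1} − 1))`; equivalently,
`(q−1)` times this count is at most `q^binom(n+d,d) − q^binom(n+d−1,d−1) + 2(q^{n+1} − 1)`. -/
theorem stmt16 (q : ℕ) (hq : IsPrimePow q) (F : Type*) [Field F] [Fintype F]
    (hF : Fintype.card F = q) (n d : ℕ) (hn : 2 ≤ n) (hd : 2 ≤ d) :
    (q - 1) *
        Nat.card {c : Associates (MvPolynomial (Fin (n + 1)) F) //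
          ∃ f : MvPolynomial (Fin (n + 1)) F, Irreducible f ∧
            (∃ e : ℕ, 1 ≤ e ∧ e ≤ d ∧ f.IsHomogeneous e) ∧ Associates.mk f = c} ≤
      q ^ ((n + d).choose d) - q ^ ((n + d - 1).choose (d - 1)) + 2 * (q ^ (n + 1) - 1) := by
  classical
  subst hF
  set Rp := MvPolynomial (Fin (n + 1)) F with hRp
  set q := Fintype.card F with hq'
  set S := {c : Associates Rp // ∃ f : Rp, Irreducible f ∧
      (∃ e : ℕ, 1 ≤ e ∧ e ≤ d ∧ f.IsHomogeneous e) ∧ Associates.mk f = c} with hS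
  -- choose representatives
  have hrep : ∀ c : S, ∃ (f : Rp) (e : ℕ), Irreducible f ∧ f.IsHomogeneous e ∧
      1 ≤ e ∧ e ≤ d ∧ Associates.mk f = (c : Associates Rp) := by
    rintro ⟨c, f, hf, ⟨e, he1, he2, hh⟩, rfl⟩
    exact ⟨f, e, hf, hh, he1, he2, rfl⟩
  choose φ ε hirr hhom hε1 hε2 hmk using hrep
  have hprime1 : Prime (X 1 : Rp) := aux_prime_X F n 1
  have hprime0 : Prime (X 0 : Rp) := aux_prime_X F n 0
  set Φ : S → Rp := fun c => φ c * X 1 ^ (d - ε c) with hΦ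
  have hΦhom : ∀ c, (Φ c).IsHomogeneous d := by
    intro c
    have := (hhom c).mul ((isHomogeneous_X F 1).pow (d - ε c))
    simpa [Nat.add_sub_cancel' (hε2 c)] using this
  have hΦne : ∀ c, Φ c ≠ 0 := fun c =>
    mul_ne_zero (hirr c).ne_zero (pow_ne_zero _ (X_ne_zero 1))
  -- injectivity up to association
  have hinj : ∀ c c' : S, Associated (Φ c) (Φ c') → c = c' := by
    intro c c' h
    have hkey : Associated (φ c) (φ c') := by
      have hp : Prime (φ c) := UniqueFactorizationMonoid.irreducible_iff_prime.mp (hirr c)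
      have hp' : Prime (φ c') := UniqueFactorizationMonoid.irreducible_iff_prime.mp (hirr c')
      have hd1 : φ c ∣ Φ c' := (dvd_mul_right _ _).trans h.dvd
      have hd2 : φ c' ∣ Φ c := (dvd_mul_right _ _).trans h.symm.dvd
      rcases hp.2.2 _ _ hd1 with h1 | h1
      · exact (hirr c).associated_of_dvd (hirr c') h1
      rcases hp'.2.2 _ _ hd2 with h2 | h2
      · exact ((hirr c').associated_of_dvd (hirr c) h2).symm
      · have e1 : Associated (φ c) (X 1) :=
          (hirr c).associated_of_dvd hprime1.irreducible (hp.dvd_of_dvd_pow h1)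
        have e2 : Associated (φ c') (X 1) :=
          (hirr c').associated_of_dvd hprime1.irreducible (hp'.dvd_of_dvd_pow h2)
        exact e1.trans e2.symm
    apply Subtype.ext
    rw [← hmk c, ← hmk c', Associates.mk_eq_mk_iff_associated]
    exact hkey
  -- not divisible by X 0 for classes other than [X 0]
  have hX0 : ∀ c : S, (c : Associates Rp) ≠ Associates.mk (X 0) → ¬ (X 0 : Rp) ∣ Φ c := by
    intro c hc hdvd
    rcases hprime0.2.2 _ _ hdvd with h1 | h1
    · have hassoc : Associated (X 0 : Rp) (φ c) :=
        hprime0.irreducible.associated_of_dvd (hirr c) h1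
      apply hc
      rw [← hmk c, Associates.mk_eq_mk_iff_associated]
      exact hassoc.symm
    · have h2 : Associated (X 0 : Rp) (X 1) :=
        hprime0.irreducible.associated_of_dvd hprime1.irreducible (hprime0.dvd_of_dvd_pow h1)
      have := (X_dvd_X (R := F)).mp h2.dvd
      have : (0 : Fin (n + 1)) = 1 := this
      simp [Fin.ext_iff] at this
      omega
  -- target set
  set U : Set Rp := {f : Rp | f.IsHomogeneous d ∧ ¬ (X 0 : Rp) ∣ f} with hU
  set S' := {c : S // (c : Associates Rp) ≠ Associates.mk (X 0)} with hS'
  -- injection from S' into U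
  have hι : ∀ c : S', Φ c.1 ∈ U := fun c => ⟨hΦhom c.1, hX0 c.1 c.2⟩
  -- finiteness of U
  haveI hWfin : Finite {f : Rp // f.IsHomogeneous d} := aux_finite_homog F (Fin (n + 1)) d
  haveI hUfin : Finite U := by
    have : Function.Injective (fun f : U => (⟨f.1, f.2.1⟩ : {f : Rp // f.IsHomogeneous d})) := by
      intro a b hab
      simpa [Subtype.ext_iff] using hab
    exact Finite.of_injective _ this
  haveI hS'fin : Finite S' := by
    have : Function.Injective (fun c : S' => (⟨Φ c.1, hι c⟩ : U)) := by
      intro a b hab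
      have : Φ a.1 = Φ b.1 := congrArg Subtype.val hab
      exact Subtype.ext (hinj _ _ (by rw [this]))
    exact Finite.of_injective _ this
  -- scalar multiples are associated
  have hsmul : ∀ (u : Fˣ) (p : Rp), Associated p ((u : F) • p) := by
    intro u p
    refine ⟨Units.map (C : F →+* Rp).toMonoidHom u, ?_⟩
    rw [smul_eq_C_mul]
    exact mul_comm _ _
  -- (q-1) * card S' ≤ card U
  have hcount1 : (q - 1) * Nat.card S' ≤ Nat.card U := by
    have hmem : ∀ (p : Fˣ × S'), (p.1 : F) • Φ p.2.1 ∈ U := by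
      rintro ⟨u, c⟩
      constructor
      · rw [smul_eq_C_mul]
        simpa using (isHomogeneous_C (Fin (n + 1)) ((u : F))).mul (hΦhom c.1)
      · rw [smul_eq_C_mul]
        rw [(u.isUnit.map (C : F →+* Rp)).dvd_mul_left]
        exact hX0 c.1 c.2
    have hΨinj : Function.Injective (fun p : Fˣ × S' => (⟨(p.1 : F) • Φ p.2.1, hmem p⟩ : U)) := by
      rintro ⟨u, c⟩ ⟨u', c'⟩ hab
      have h1 : (u : F) • Φ c.1 = (u' : F) • Φ c'.1 := congrArg Subtype.val hab
      have hcc : c = c' := by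
        apply Subtype.ext
        apply hinj
        exact (hsmul u _).trans (h1 ▸ (hsmul u' (Φ c'.1)).symm)
      subst hcc
      have h2 : (u : F) = (u' : F) := smul_left_injective F (hΦne c.1) h1
      exact Prod.ext (Units.ext h2) rfl
    have := Nat.card_le_card_of_injective _ hΨinj
    rwa [Nat.card_prod, Nat.card_eq_fintype_card, Fintype.card_units] at this
  -- card S ≤ card S' + 1
  haveI : Fintype S' := Fintype.ofFinite S'
  haveI hSfin : Finite S := by
    have hj : Function.Injective (fun c : S =>
        if h : (c : Associates Rp) = Associates.mk (X 0) then (none : Option S')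
        else some ⟨c, h⟩) := by
      intro a b hab
      by_cases ha : (a : Associates Rp) = Associates.mk (X 0) <;>
        by_cases hb : (b : Associates Rp) = Associates.mk (X 0) <;>
        simp [ha, hb] at hab
      · exact Subtype.ext (ha.trans hb.symm)
      · exact Subtype.ext (congrArg (Subtype.val ∘ Subtype.val) hab)
    exact Finite.of_injective _ hj
  have hcount2 : Nat.card S ≤ Nat.card S' + 1 := by
    have hj : Function.Injective (fun c : S =>
        if h : (c : Associates Rp) = Associates.mk (X 0) then (none : Option S')
        else some ⟨c, h⟩) := by
      intro a b hab
      by_cases ha : (a : Associates Rp) = Associates.mk (X 0) <;>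
        by_cases hb : (b : Associates Rp) = Associates.mk (X 0) <;>
        simp [ha, hb] at hab
      · exact Subtype.ext (ha.trans hb.symm)
      · exact Subtype.ext (congrArg (Subtype.val ∘ Subtype.val) hab)
    have := Nat.card_le_card_of_injective _ hj
    rwa [Nat.card_eq_fintype_card (α := Option S'), Fintype.card_option,
      ← Nat.card_eq_fintype_card] at this
  -- card U ≤ q^C(n+d,d) - q^C(n+d-1,d-1)
  have hUbound : Nat.card U ≤ q ^ ((n + d).choose d) - q ^ ((n + d - 1).choose (d - 1)) := by
    set W : Set Rp := {f : Rp | f.IsHomogeneous d} with hW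
    set D : Set Rp := (fun g : Rp => X 0 * g) '' {f : Rp | f.IsHomogeneous (d - 1)} with hD
    have hDW : D ⊆ W := by
      rintro _ ⟨g, hg, rfl⟩
      have h1 : ((X 0 : Rp) * g).IsHomogeneous (1 + (d - 1)) := (isHomogeneous_X F 0).mul hg
      have h2 : 1 + (d - 1) = d := by omega
      rw [h2] at h1
      exact h1
    have hUWD : U ⊆ W \ D := by
      rintro f ⟨hf1, hf2⟩
      refine ⟨hf1, ?_⟩
      rintro ⟨g, hg, rfl⟩
      exact hf2 (dvd_mul_right _ _)
    haveI hWfin2 : Finite W := aux_finite_homog F (Fin (n + 1)) d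
    haveI hW1fin : Finite ({f : Rp | f.IsHomogeneous (d - 1)} : Set Rp) :=
      aux_finite_homog F (Fin (n + 1)) (d - 1)
    have hWfinS : W.Finite := Set.finite_coe_iff.mp hWfin2
    have hDfinS : D.Finite := (Set.finite_coe_iff.mp hW1fin).image _
    have step1 : Nat.card U ≤ (W \ D).ncard :=
      Set.ncard_le_ncard hUWD (hWfinS.subset Set.diff_subset)
    have step2 : (W \ D).ncard = W.ncard - D.ncard := Set.ncard_diff hDW hDfinS
    have hWcard : W.ncard = q ^ ((n + d).choose d) := by
      have := aux_card_homog F (Fin (n + 1)) d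
      rw [Fintype.card_fin] at this
      have h2 : n + 1 + d - 1 = n + d := by omega
      rw [h2] at this
      simpa only [Set.ncard_eq_toFinset_card', Nat.card_coe_set_eq] using
        (Nat.card_coe_set_eq W) ▸ this
    have hDcard : D.ncard = q ^ ((n + d - 1).choose (d - 1)) := by
      have hinj0 : Function.Injective (fun g : Rp => X 0 * g) :=
        mul_right_injective₀ (X_ne_zero 0)
      rw [hD, Set.ncard_image_of_injective _ hinj0]
      have := aux_card_homog F (Fin (n + 1)) (d - 1)
      rw [Fintype.card_fin] at this
      have h2 : n + 1 + (d - 1) - 1 = n + d - 1 := by omega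
      rw [h2] at this
      simpa only [Nat.card_coe_set_eq] using
        (Nat.card_coe_set_eq {f : Rp | f.IsHomogeneous (d - 1)}) ▸ this
    calc Nat.card U ≤ (W \ D).ncard := step1
      _ = W.ncard - D.ncard := step2
      _ = q ^ ((n + d).choose d) - q ^ ((n + d - 1).choose (d - 1)) := by
          rw [hWcard, hDcard]
  -- final arithmetic
  have hq2 : 2 ≤ q := Fintype.one_lt_card
  have hqpow : q ≤ q ^ (n + 1) := Nat.le_self_pow (by omega) q
  have hlast : q - 1 ≤ 2 * (q ^ (n + 1) - 1) := by omega
  calc (q - 1) * Nat.card S ≤ (q - 1) * (Nat.card S' + 1) :=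
        Nat.mul_le_mul_left _ hcount2
    _ = (q - 1) * Nat.card S' + (q - 1) := by ring
    _ ≤ Nat.card U + (q - 1) := Nat.add_le_add_right hcount1 _
    _ ≤ (q ^ ((n + d).choose d) - q ^ ((n + d - 1).choose (d - 1))) + (q - 1) :=
        Nat.add_le_add_right hUbound _
    _ ≤ q ^ ((n + d).choose d) - q ^ ((n + d - 1).choose (d - 1)) + 2 * (q ^ (n + 1) - 1) :=
        Nat.add_le_add_left hlast _
end
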